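/- arXiv:0808.3631 — 3 statements merged into one kernel-verified Lean document; each statement's English description precedes it below -/
import Mathlib

section
/- Let C, M < ∞, let f : [0,T]×O → ℝ be measurable with |f(s,q)| ≤ C for all (s,q), and let u ∈ L²([0,T]×O) with ∫_{[0,T]×O} u² ≤ M. Define Ψ(t,r) = ∫₀^t ∫_O G(t,s,r,q) f(s,q) u(s,q) dq ds. Then for every α ∈ (0, ᾱ) there exists a constant c < ∞, depending only on α, K, T, γ, d, O, C and M, such that |Ψ(t₂,r₂) − Ψ(t₁,r₁)| ≤ c · ρ((t₁,r₁),(t₂,r₂))^α for all t₁,t₂ ∈ [0,T] and r₁,r₂ ∈ O, where ρ denotes the Euclidean distance on [0,T]×O ⊂ ℝ^{d+1}. -/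
open MeasureTheory Filter Set Topology
open scoped ENNReal NNReal

noncomputable section

/-- Euclidean space `ℝ^d`. -/
abbrev Euc (d : ℕ) := EuclideanSpace ℝ (Fin d)

/-- `u ∈ L²([0,T] × O)`. -/
def MemL2 {d : ℕ} (O : Set (Euc d)) (T : ℝ) (u : ℝ → Euc d → ℝ) : Prop :=
  MemLp (fun p : ℝ × Euc d => u p.1 p.2) 2
    (((volume : Measure ℝ).restrict (Icc (0:ℝ) T)).prod
      ((volume : Measure (Euc d)).restrict O))

/-- `∫_{[0,T]×O} u²`, as an extended real. -/
def energy {d : ℕ} (O : Set (Euc d)) (T : ℝ) (u : ℝ → Euc d → ℝ) : ℝ≥0∞ :=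
  ∫⁻ s in Icc (0:ℝ) T, ∫⁻ q in O, (‖u s q‖₊ : ℝ≥0∞) ^ 2

lemma aux_sq (x : ℝ≥0∞) : x ^ (2:ℝ) = x * x := by
  rw [show (2:ℝ) = ((2:ℕ):ℝ) by norm_num, ENNReal.rpow_natCast]; ring


lemma aux_pow_bound (x y D p e : ℝ) (hx : 0 ≤ x) (hxy : x ≤ y) (hyD : y ≤ D)
    (hep : e ≤ p) (hp0 : 0 < p) : x ^ p ≤ D ^ (p - e) * y ^ e := by
  have hy : 0 ≤ y := hx.trans hxy
  calc x ^ p ≤ y ^ p := Real.rpow_le_rpow hx hxy hp0.le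
    _ = y ^ (p - e) * y ^ e := by
        rw [← Real.rpow_add' hy (by rw [sub_add_cancel]; exact hp0.ne')]
        ring_nf
    _ ≤ D ^ (p - e) * y ^ e := by
        exact mul_le_mul_of_nonneg_right
          (Real.rpow_le_rpow hy hyD (by linarith)) (Real.rpow_nonneg hy _)

lemma aux_rint (c : ℝ) (hc1 : c < 1) (x y : ℝ) (hxy : x ≤ y) :
    ∫ s in Ico x y, (y - s) ^ (-c) = (y - x) ^ (1 - c) / (1 - c) := by
  rw [Measure.restrict_congr_set Ico_ae_eq_Ioc, ← intervalIntegral.integral_of_le hxy]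
  rw [intervalIntegral.integral_comp_sub_left (fun τ => τ ^ (-c)) y]
  simp only [sub_self]
  rw [integral_rpow (Or.inl (by linarith : (-1:ℝ) < -c))]
  rw [Real.zero_rpow (by linarith : -c + 1 ≠ 0)]
  ring_nf

lemma aux_iint (c : ℝ) (hc1 : c < 1) (x y : ℝ) (hxy : x ≤ y) :
    IntegrableOn (fun s => (y - s) ^ (-c)) (Ico x y) := by
  rw [IntegrableOn, Measure.restrict_congr_set Ico_ae_eq_Ioc]
  have h : IntervalIntegrable (fun τ : ℝ => τ ^ (-c)) volume (y - y) (y - x) :=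
    intervalIntegral.intervalIntegrable_rpow' (by linarith)
  have h2 := h.comp_sub_left y
  exact (intervalIntegrable_iff_integrableOn_Ioc_of_le hxy).mp
    ((by simpa using h2 : IntervalIntegrable (fun s => (y - s) ^ (-c)) volume y x).symm)

lemma aux_lint (c : ℝ) (hc1 : c < 1) (x y : ℝ) (hxy : x ≤ y) :
    ∫⁻ s in Ico x y, ENNReal.ofReal ((y - s) ^ (-c)) ≤
      ENNReal.ofReal ((y - x) ^ (1 - c) / (1 - c)) := by
  rw [← ofReal_integral_eq_lintegral_ofReal (aux_iint c hc1 x y hxy)]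
  · exact le_of_eq (congrArg _ (aux_rint c hc1 x y hxy))
  · filter_upwards [ae_restrict_mem measurableSet_Ico] with s hs
    exact Real.rpow_nonneg (by linarith [hs.2] : (0:ℝ) ≤ y - s) _

/-- piece bound : `∫⁻ s in Ico x y, ofReal (K' * (y-s)^(-c)) ≤ ofReal (K' * ((y-x)^(1-c)/(1-c)))` -/
lemma aux_piece (c K' x y : ℝ) (hc1 : c < 1) (hK' : 0 ≤ K') (hxy : x ≤ y) :
    ∫⁻ s in Ico x y, ENNReal.ofReal (K' * (y - s) ^ (-c)) ≤
      ENNReal.ofReal (K' * ((y - x) ^ (1 - c) / (1 - c))) := by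
  calc ∫⁻ s in Ico x y, ENNReal.ofReal (K' * (y - s) ^ (-c))
      = ∫⁻ s in Ico x y, ENNReal.ofReal K' * ENNReal.ofReal ((y - s) ^ (-c)) := by
        simp_rw [← ENNReal.ofReal_mul hK']
    _ = ENNReal.ofReal K' * ∫⁻ s in Ico x y, ENNReal.ofReal ((y - s) ^ (-c)) :=
        lintegral_const_mul' _ _ ENNReal.ofReal_ne_top
    _ ≤ ENNReal.ofReal K' * ENNReal.ofReal ((y - x) ^ (1 - c) / (1 - c)) :=
        mul_le_mul_right (aux_lint c hc1 x y hxy) _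
    _ = ENNReal.ofReal (K' * ((y - x) ^ (1 - c) / (1 - c))) :=
        (ENNReal.ofReal_mul hK').symm

lemma aux_min_interp (P Q θ : ℝ) (hP : 0 ≤ P) (hQ : 0 ≤ Q) (hθ0 : 0 ≤ θ) (hθ1 : θ ≤ 1) :
    min P Q ≤ P ^ (1 - θ) * Q ^ θ := by
  have hm : 0 ≤ min P Q := le_min hP hQ
  have h1 : min P Q = (min P Q) ^ (1 - θ) * (min P Q) ^ θ := by
    rw [← Real.rpow_add' hm (by norm_num), sub_add_cancel, Real.rpow_one]
  rw [h1]
  exact mul_le_mul (Real.rpow_le_rpow hm (min_le_left _ _) (by linarith))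
    (Real.rpow_le_rpow hm (min_le_right _ _) hθ0) (Real.rpow_nonneg hm _)
    (Real.rpow_nonneg hP _)

lemma aux_interp_bound (K ε τ a A θ e cx : ℝ) (hK : 0 < K) (hε : 0 ≤ ε) (hτ : 0 < τ)
    (ha0 : 0 ≤ a) (hθ0 : 0 < θ) (hθ1 : θ < 1) (hθe : 2 * A * θ = e)
    (hcx : cx = θ + (1 - θ) * a) :
    min (2 * K * τ ^ (-a)) (K * (ε ^ (2 * A) * τ⁻¹)) ≤ 2 * K * ε ^ e * τ ^ (-cx) := by
  have h1 : min (2 * K * τ ^ (-a)) (K * (ε ^ (2 * A) * τ⁻¹)) ≤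
      (2 * K * τ ^ (-a)) ^ (1 - θ) * (K * (ε ^ (2 * A) * τ⁻¹)) ^ θ :=
    aux_min_interp _ _ θ (by positivity) (by positivity) hθ0.le hθ1.le
  have e1 : (2 * K * τ ^ (-a)) ^ (1 - θ) = (2 * K) ^ (1 - θ) * τ ^ (-a * (1 - θ)) := by
    rw [Real.mul_rpow (by positivity) (Real.rpow_nonneg hτ.le _), ← Real.rpow_mul hτ.le]
  have e2 : (K * (ε ^ (2 * A) * τ⁻¹)) ^ θ = K ^ θ * (ε ^ e * τ ^ (-θ)) := by
    rw [Real.mul_rpow hK.le (by positivity),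
      Real.mul_rpow (Real.rpow_nonneg hε _) (by positivity),
      ← Real.rpow_mul hε, ← Real.rpow_neg_one τ, ← Real.rpow_mul hτ.le]
    rw [show 2 * A * θ = e from hθe]
    norm_num
  have e3 : τ ^ (-a * (1 - θ)) * τ ^ (-θ) = τ ^ (-cx) := by
    rw [← Real.rpow_add hτ, hcx]; ring_nf
  have e4 : (2 * K) ^ (1 - θ) * K ^ θ ≤ 2 * K := by
    have h5 : K ^ θ ≤ (2 * K) ^ θ :=
      Real.rpow_le_rpow hK.le (by linarith) hθ0.le
    have h6 : (2 * K) ^ (1 - θ) * (2 * K) ^ θ = 2 * K := by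
      rw [← Real.rpow_add (by linarith), sub_add_cancel, Real.rpow_one]
    calc (2 * K) ^ (1 - θ) * K ^ θ ≤ (2 * K) ^ (1 - θ) * (2 * K) ^ θ :=
          mul_le_mul_of_nonneg_left h5 (Real.rpow_nonneg (by linarith) _)
      _ = 2 * K := h6
  calc min (2 * K * τ ^ (-a)) (K * (ε ^ (2 * A) * τ⁻¹))
      ≤ (2 * K * τ ^ (-a)) ^ (1 - θ) * (K * (ε ^ (2 * A) * τ⁻¹)) ^ θ := h1
    _ = ((2 * K) ^ (1 - θ) * K ^ θ) * (ε ^ e * (τ ^ (-a * (1 - θ)) * τ ^ (-θ))) := by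
        rw [e1, e2]; ring
    _ = ((2 * K) ^ (1 - θ) * K ^ θ) * (ε ^ e * τ ^ (-cx)) := by rw [e3]
    _ ≤ (2 * K) * (ε ^ e * τ ^ (-cx)) := by
        apply mul_le_mul_of_nonneg_right e4 (by positivity)
    _ = 2 * K * ε ^ e * τ ^ (-cx) := by ring


set_option maxHeartbeats 1000000 in
/-- **Hölder continuity of the controlled convolution `Ψ`.**
If `|f| ≤ C` on `[0,T]×O` and `∫_{[0,T]×O} u² ≤ M`, then for every `α ∈ (0, ᾱ)`
the function `Ψ(t,r) = ∫₀^t ∫_O G(t,s,r,q) f(s,q) u(s,q) dq ds` satisfies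
`|Ψ(t₂,r₂) − Ψ(t₁,r₁)| ≤ c ρ((t₁,r₁),(t₂,r₂))^α` on `[0,T]×O`, with a constant
`c` depending only on `α, K, T, γ, d, O, C, M`. -/
theorem stmt_13
    {d : ℕ} (O : Set (Euc d)) (hOopen : IsOpen O) (hObdd : Bornology.IsBounded O)
    (T K γ : ℝ) (hT : 0 < T) (hK : 0 < K) (hγ : (d : ℝ) < γ)
    (G : ℝ → ℝ → Euc d → Euc d → ℝ)
    (hGmeas : Measurable fun p : (ℝ × ℝ) × Euc d × Euc d => G p.1.1 p.1.2 p.2.1 p.2.2)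
    (hGzero : ∀ t s : ℝ, t ≤ s → ∀ r q : Euc d, G t s r q = 0)
    (hG1 : ∀ t ∈ Icc (0:ℝ) T, ∀ s ∈ Icc (0:ℝ) T, ∀ r ∈ O,
      (∫⁻ q in O, (‖G t s r q‖₊ : ℝ≥0∞)) ≤ ENNReal.ofReal K)
    (hG2 : ∀ s t : ℝ, 0 ≤ s → s < t → t ≤ T → ∀ r ∈ O, ∀ q ∈ O,
      |G t s r q| ≤ K * (t - s) ^ (-(d : ℝ) / γ))
    (hG3 : ∀ β : ℝ, 0 < β → β < (γ - d) / (2 * γ) →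
      ∀ s t₁ t₂ : ℝ, 0 ≤ s → s < t₁ → t₁ ≤ t₂ → t₂ ≤ T →
      ∀ r₁ ∈ O, ∀ r₂ ∈ O, ∀ q ∈ O,
      |G t₁ s r₁ q - G t₂ s r₂ q| ≤
        K * ((t₂ - t₁) ^ (1 - (d : ℝ) / γ) * (t₁ - s)⁻¹ +
          ‖r₁ - r₂‖ ^ (2 * β) * (t₁ - s) ^ (-((d : ℝ) + 2 * β) / γ)))
    (C M : ℝ)
    (f : ℝ → Euc d → ℝ)
    (hfmeas : Measurable fun p : ℝ × Euc d => f p.1 p.2)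
    (hfbdd : ∀ s ∈ Icc (0:ℝ) T, ∀ q ∈ O, |f s q| ≤ C)
    (u : ℝ → Euc d → ℝ) (huL2 : MemL2 O T u)
    (huM : energy O T u ≤ ENNReal.ofReal M)
    (Ψ : ℝ → Euc d → ℝ)
    (hΨ : ∀ t r, Ψ t r = ∫ s in Icc (0:ℝ) t, ∫ q in O, G t s r q * f s q * u s q)
    (α : ℝ) (hα0 : 0 < α) (hαlt : α < (γ - (d : ℝ)) / (2 * γ)) :
    ∃ c : ℝ, 0 ≤ c ∧
      ∀ t₁ ∈ Icc (0:ℝ) T, ∀ t₂ ∈ Icc (0:ℝ) T, ∀ r₁ ∈ O, ∀ r₂ ∈ O,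
        |Ψ t₂ r₂ - Ψ t₁ r₁| ≤
          c * Real.sqrt ((t₁ - t₂) ^ 2 + ‖r₁ - r₂‖ ^ 2) ^ α := by
  classical
  -- dispose of the empty case
  rcases O.eq_empty_or_nonempty with hO | ⟨q₀, hq₀⟩
  · exact ⟨0, le_refl 0, fun t₁ _ t₂ _ r₁ hr₁ => absurd hr₁ (by simp [hO])⟩
  have hOmeas : MeasurableSet O := hOopen.measurableSet
  -- basic exponent facts
  have hγ0 : (0:ℝ) < γ := lt_of_le_of_lt (Nat.cast_nonneg d) hγ
  set a : ℝ := (d : ℝ) / γ with ha_def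
  have ha0 : 0 ≤ a := div_nonneg (Nat.cast_nonneg d) hγ0.le
  have ha1 : a < 1 := (div_lt_one hγ0).mpr hγ
  set A : ℝ := (1 - a) / 2 with hA_def
  have hA0 : 0 < A := by simp only [hA_def]; linarith
  have h1a : 1 - a = (γ - (d:ℝ)) / γ := by
    rw [ha_def]; field_simp
  have hAeq : A = (γ - (d:ℝ)) / (2 * γ) := by
    rw [hA_def, h1a]; ring
  have hαA : α < A := by rw [hAeq]; exact hαlt
  set β : ℝ := (α + A) / 2 with hβ_def
  have hβ0 : 0 < β := by simp only [hβ_def]; linarith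
  have hβA : β < A := by simp only [hβ_def]; linarith
  have hαβ : α < β := by simp only [hβ_def]; linarith
  set e : ℝ := α + A with he_def
  have he0 : 0 < e := by simp only [he_def]; linarith
  have he2α : 2 * α < e := by simp only [he_def]; linarith
  set θ : ℝ := e / (2 * A) with hθ_def
  have hθ0 : 0 < θ := div_pos he0 (by linarith)
  have hθ1 : θ < 1 := by
    rw [hθ_def, div_lt_one (by linarith)]; simp only [he_def]; linarith
  have hθe : 2 * A * θ = e := by
    rw [hθ_def]; field_simp
  set cexp : ℝ := θ + (1 - θ) * a with hcexp_def
  have hc0 : 0 ≤ cexp := by nlinarith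
  have hc1 : cexp < 1 := by nlinarith
  set b : ℝ := ((d : ℝ) + 2 * β) / γ with hb_def
  have hb0 : 0 ≤ b := div_nonneg (by positivity) hγ0.le
  have hbd : d ≠ 0 → b < 1 := by
    intro hd
    have hd1 : (1:ℝ) ≤ (d:ℝ) := by exact_mod_cast Nat.one_le_iff_ne_zero.mpr hd
    have hγ1 : (1:ℝ) < γ := lt_of_le_of_lt hd1 hγ
    rw [hb_def, div_lt_one hγ0]
    have h2β : 2 * β < 2 * A := by linarith
    have h2A : 2 * A * γ = γ - (d:ℝ) := by
      rw [hAeq]; field_simp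
    nlinarith
  have hrzero : d = 0 → ∀ x y : Euc d, x = y := by
    intro hd x y
    subst hd
    exact Subsingleton.elim x y
  -- bound on diameter
  obtain ⟨R₀, hR₀⟩ := Metric.isBounded_iff.mp hObdd
  set R : ℝ := max R₀ 0 with hR_def
  have hR0 : 0 ≤ R := le_max_right _ _
  have hRO : ∀ r₁ ∈ O, ∀ r₂ ∈ O, ‖r₁ - r₂‖ ≤ R := by
    intro r₁ h₁ r₂ h₂
    rw [← dist_eq_norm]
    exact le_max_of_le_left (hR₀ h₁ h₂)
  set D₀ : ℝ := Real.sqrt (T ^ 2 + R ^ 2) with hD₀_def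
  have hD₀0 : 0 ≤ D₀ := Real.sqrt_nonneg _
  -- nonnegativity of C
  have hC0 : 0 ≤ C := le_trans (abs_nonneg _) (hfbdd 0 ⟨le_refl 0, hT.le⟩ q₀ hq₀)
  set M' : ℝ := max M 0 with hM'_def
  have hM'0 : 0 ≤ M' := le_max_right _ _
  have huM' : energy O T u ≤ ENNReal.ofReal M' :=
    le_trans huM (ENNReal.ofReal_le_ofReal (le_max_left _ _))
  -- measures
  set μ : Measure ℝ := volume.restrict (Icc (0:ℝ) T) with hμ_def
  set ν : Measure (Euc d) := volume.restrict O with hν_def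
  set π : Measure (ℝ × Euc d) := μ.prod ν with hπ_def
  -- measurability helpers
  have mG : ∀ t (r : Euc d), Measurable fun p : ℝ × Euc d => G t p.1 r p.2 := by
    intro t r
    exact hGmeas.comp ((measurable_const.prodMk measurable_fst).prodMk
      (measurable_const.prodMk measurable_snd))
  have mGq : ∀ t s (r : Euc d), Measurable fun q : Euc d => G t s r q := by
    intro t s r
    exact hGmeas.comp ((measurable_const.prodMk measurable_const).prodMk
      (measurable_const.prodMk measurable_id))
  have mGq2 : ∀ t s (r : Euc d), Measurable fun q : Euc d => (‖G t s r q‖₊ : ℝ≥0∞) :=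
    fun t s r => (mGq t s r).nnnorm.coe_nnreal_ennreal
  -- inner bound: from sup bound and L¹ bound to L² bound
  have inner_bd : ∀ (W : Euc d → ℝ) (S L : ℝ), 0 ≤ S →
      (∀ q ∈ O, |W q| ≤ S) → (∫⁻ q in O, (‖W q‖₊ : ℝ≥0∞)) ≤ ENNReal.ofReal L →
      ∫⁻ q in O, (‖W q‖₊ : ℝ≥0∞) ^ (2:ℝ) ≤ ENNReal.ofReal (S * L) := by
    intro W S L hS hsup hL1
    calc ∫⁻ q in O, (‖W q‖₊ : ℝ≥0∞) ^ (2:ℝ)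
        = ∫⁻ q in O, (‖W q‖₊ : ℝ≥0∞) * (‖W q‖₊ : ℝ≥0∞) := by simp_rw [aux_sq]
      _ ≤ ∫⁻ q in O, ENNReal.ofReal S * (‖W q‖₊ : ℝ≥0∞) := by
          apply lintegral_mono_ae
          filter_upwards [ae_restrict_mem hOmeas] with q hq
          apply mul_le_mul_left
          rw [← enorm_eq_nnnorm, ← ofReal_norm, Real.norm_eq_abs]
          exact ENNReal.ofReal_le_ofReal (hsup q hq)
      _ = ENNReal.ofReal S * ∫⁻ q in O, (‖W q‖₊ : ℝ≥0∞) :=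
          lintegral_const_mul' _ _ ENNReal.ofReal_ne_top
      _ ≤ ENNReal.ofReal S * ENNReal.ofReal L := mul_le_mul_right hL1 _
      _ = ENNReal.ofReal (S * L) := (ENNReal.ofReal_mul hS).symm
  -- L¹ bound for differences
  have hdiff1 : ∀ (t₁ t₂ s : ℝ) (r₁ r₂ : Euc d), t₁ ∈ Icc (0:ℝ) T → t₂ ∈ Icc (0:ℝ) T →
      s ∈ Icc (0:ℝ) T → r₁ ∈ O → r₂ ∈ O →
      (∫⁻ q in O, (‖G t₂ s r₂ q - G t₁ s r₁ q‖₊ : ℝ≥0∞)) ≤ ENNReal.ofReal (2 * K) := by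
    intro t₁ t₂ s r₁ r₂ ht₁ ht₂ hs hr₁ hr₂
    calc ∫⁻ q in O, (‖G t₂ s r₂ q - G t₁ s r₁ q‖₊ : ℝ≥0∞)
        ≤ ∫⁻ q in O, ((‖G t₂ s r₂ q‖₊ : ℝ≥0∞) + (‖G t₁ s r₁ q‖₊ : ℝ≥0∞)) := by
          apply lintegral_mono
          intro q
          simp only []
          exact_mod_cast nnnorm_sub_le (G t₂ s r₂ q) (G t₁ s r₁ q)
      _ = (∫⁻ q in O, (‖G t₂ s r₂ q‖₊ : ℝ≥0∞)) + ∫⁻ q in O, (‖G t₁ s r₁ q‖₊ : ℝ≥0∞) :=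
          lintegral_add_left (mGq2 t₂ s r₂) _
      _ ≤ ENNReal.ofReal K + ENNReal.ofReal K :=
          add_le_add (hG1 t₂ ht₂ s hs r₂ hr₂) (hG1 t₁ ht₁ s hs r₁ hr₁)
      _ = ENNReal.ofReal (2 * K) := by
          rw [← ENNReal.ofReal_add hK.le hK.le]; ring_nf
  -- constants
  set Ic : ℝ := T ^ (1 - cexp) / (1 - cexp) with hIc_def
  have hIc0 : 0 ≤ Ic := div_nonneg (Real.rpow_nonneg hT.le _) (by linarith)
  set Jb : ℝ := max (T ^ (1 - b) / (1 - b)) 0 with hJb_def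
  have hJb0 : 0 ≤ Jb := le_max_right _ _
  set c₂ : ℝ := (4*K^2*Ic + 2*K^2*Jb) * D₀ ^ (e - 2*α) + (K^2/(1-a)) * D₀ ^ (2*A - 2*α)
    with hc₂_def
  have hc₂0 : 0 ≤ c₂ :=
    add_nonneg
      (mul_nonneg
        (add_nonneg (mul_nonneg (mul_nonneg (by norm_num) (sq_nonneg K)) hIc0)
          (mul_nonneg (mul_nonneg (by norm_num) (sq_nonneg K)) hJb0))
        (Real.rpow_nonneg hD₀0 _))
      (mul_nonneg (div_nonneg (sq_nonneg K) (by linarith)) (Real.rpow_nonneg hD₀0 _))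
  have h2A1 : 2 * A = 1 - a := by rw [hA_def]; ring
  have h2βe : 2 * β = e := by rw [hβ_def, he_def]; ring
  -- pointwise sup bound on the main region
  have hsup1 : ∀ (t₁ t₂ s : ℝ) (r₁ r₂ : Euc d), t₁ ∈ Icc (0:ℝ) T → t₂ ∈ Icc (0:ℝ) T →
      t₁ ≤ t₂ → s ∈ Ico (0:ℝ) t₁ → r₁ ∈ O → r₂ ∈ O → ∀ q ∈ O,
      |G t₂ s r₂ q - G t₁ s r₁ q| ≤
        2*K*(t₂-t₁)^e*(t₁-s)^(-cexp) + K*(‖r₁-r₂‖^(2*β)*(t₁-s)^(-b)) := by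
    intro t₁ t₂ s r₁ r₂ ht₁ ht₂ h12 hs hr₁ hr₂ q hq
    have hτ : 0 < t₁ - s := by linarith [hs.2]
    have hε : 0 ≤ t₂ - t₁ := by linarith
    have hexp1 : -(d:ℝ)/γ = -a := by rw [ha_def]; ring
    have hX : |G t₂ s r₂ q - G t₁ s r₁ q| ≤ 2*K*(t₁-s)^(-a) := by
      have b2 : |G t₂ s r₂ q| ≤ K * (t₂ - s) ^ (-a) := by
        have h := hG2 s t₂ hs.1 (lt_of_lt_of_le hs.2 h12) ht₂.2 r₂ hr₂ q hq
        rwa [hexp1] at h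
      have b1 : |G t₁ s r₁ q| ≤ K * (t₁ - s) ^ (-a) := by
        have h := hG2 s t₁ hs.1 hs.2 ht₁.2 r₁ hr₁ q hq
        rwa [hexp1] at h
      have hmono : (t₂ - s) ^ (-a) ≤ (t₁ - s) ^ (-a) :=
        Real.rpow_le_rpow_of_nonpos hτ (by linarith) (by linarith)
      have hmono' : K * (t₂ - s) ^ (-a) ≤ K * (t₁ - s) ^ (-a) :=
        mul_le_mul_of_nonneg_left hmono hK.le
      calc |G t₂ s r₂ q - G t₁ s r₁ q| ≤ |G t₂ s r₂ q| + |G t₁ s r₁ q| := abs_sub _ _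
        _ ≤ K * (t₂-s)^(-a) + K*(t₁-s)^(-a) := add_le_add b2 b1
        _ ≤ 2*K*(t₁-s)^(-a) := by linarith
    have hYZ : |G t₂ s r₂ q - G t₁ s r₁ q| ≤
        K*((t₂-t₁)^(2*A)*(t₁-s)⁻¹) + K*(‖r₁-r₂‖^(2*β)*(t₁-s)^(-b)) := by
      have h := hG3 β hβ0 (hAeq ▸ hβA) s t₁ t₂ hs.1 hs.2 h12 ht₂.2 r₁ hr₁ r₂ hr₂ q hq
      rw [abs_sub_comm]
      have he1 : 1 - (d:ℝ)/γ = 2*A := by rw [hA_def, ha_def]; ring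
      have he2 : -((d:ℝ)+2*β)/γ = -b := by rw [hb_def]; ring
      rw [he1, he2] at h
      calc |G t₁ s r₁ q - G t₂ s r₂ q|
          ≤ K * ((t₂-t₁)^(2*A)*(t₁-s)⁻¹ + ‖r₁-r₂‖^(2*β)*(t₁-s)^(-b)) := h
        _ = K*((t₂-t₁)^(2*A)*(t₁-s)⁻¹) + K*(‖r₁-r₂‖^(2*β)*(t₁-s)^(-b)) := by ring
    have hZ0 : 0 ≤ K*(‖r₁-r₂‖^(2*β)*(t₁-s)^(-b)) := by positivity
    have hmin : |G t₂ s r₂ q - G t₁ s r₁ q| ≤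
        min (2*K*(t₁-s)^(-a)) (K*((t₂-t₁)^(2*A)*(t₁-s)⁻¹))
          + K*(‖r₁-r₂‖^(2*β)*(t₁-s)^(-b)) := by
      rcases le_total (2*K*(t₁-s)^(-a)) (K*((t₂-t₁)^(2*A)*(t₁-s)⁻¹)) with h|h
      · rw [min_eq_left h]; linarith
      · rw [min_eq_right h]; linarith
    have hint := aux_interp_bound K (t₂-t₁) (t₁-s) a A θ e cexp hK hε hτ ha0 hθ0 hθ1
      hθe hcexp_def
    calc |G t₂ s r₂ q - G t₁ s r₁ q|
        ≤ min (2*K*(t₁-s)^(-a)) (K*((t₂-t₁)^(2*A)*(t₁-s)⁻¹))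
          + K*(‖r₁-r₂‖^(2*β)*(t₁-s)^(-b)) := hmin
      _ ≤ 2*K*(t₂-t₁)^e*(t₁-s)^(-cexp) + K*(‖r₁-r₂‖^(2*β)*(t₁-s)^(-b)) :=
          add_le_add_left hint _
  -- main square-integral estimate for differences
  have EST : ∀ (t₁ t₂ : ℝ) (r₁ r₂ : Euc d), t₁ ∈ Icc (0:ℝ) T → t₂ ∈ Icc (0:ℝ) T →
      t₁ ≤ t₂ → r₁ ∈ O → r₂ ∈ O →
      ∫⁻ s in Icc (0:ℝ) T, ∫⁻ q in O, (‖G t₂ s r₂ q - G t₁ s r₁ q‖₊ : ℝ≥0∞) ^ (2:ℝ)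
        ≤ ENNReal.ofReal (c₂ * Real.sqrt ((t₁ - t₂)^2 + ‖r₁ - r₂‖^2) ^ (2*α)) := by
    intro t₁ t₂ r₁ r₂ ht₁ ht₂ h12 hr₁ hr₂
    set Δ := Real.sqrt ((t₁ - t₂)^2 + ‖r₁ - r₂‖^2) with hΔ_def
    have hΔ0 : 0 ≤ Δ := Real.sqrt_nonneg _
    have hεΔ : t₂ - t₁ ≤ Δ := by
      calc t₂ - t₁ = Real.sqrt ((t₁-t₂)^2) := by
            rw [Real.sqrt_sq_eq_abs, abs_sub_comm, abs_of_nonneg (by linarith)]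
        _ ≤ Δ := Real.sqrt_le_sqrt (le_add_of_nonneg_right (sq_nonneg _))
    have hrΔ : ‖r₁ - r₂‖ ≤ Δ := by
      calc ‖r₁-r₂‖ = Real.sqrt (‖r₁-r₂‖^2) := (Real.sqrt_sq (norm_nonneg _)).symm
        _ ≤ Δ := Real.sqrt_le_sqrt (le_add_of_nonneg_left (sq_nonneg _))
    have hΔD : Δ ≤ D₀ := by
      rw [hΔ_def, hD₀_def]
      apply Real.sqrt_le_sqrt
      have h1 : (t₁-t₂)^2 ≤ T^2 := sq_le_sq' (by linarith [ht₁.1, ht₂.2]) (by linarith [ht₁.2, ht₂.1])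
      have h2 : ‖r₁-r₂‖^2 ≤ R^2 := pow_le_pow_left₀ (norm_nonneg _) (hRO r₁ hr₁ r₂ hr₂) 2
      linarith
    have hsplit : Icc (0:ℝ) T ⊆ Ico 0 t₁ ∪ Ico t₁ t₂ ∪ Icc t₂ T := by
      intro s hs
      rcases lt_or_ge s t₁ with h|h
      · exact Or.inl (Or.inl ⟨hs.1, h⟩)
      rcases lt_or_ge s t₂ with h'|h'
      · exact Or.inl (Or.inr ⟨h, h'⟩)
      · exact Or.inr ⟨h', hs.2⟩
    set F : ℝ → ℝ≥0∞ :=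
      fun s => ∫⁻ q in O, (‖G t₂ s r₂ q - G t₁ s r₁ q‖₊ : ℝ≥0∞) ^ (2:ℝ) with hF_def
    have hstep : ∫⁻ s in Icc (0:ℝ) T, F s ≤
        ((∫⁻ s in Ico (0:ℝ) t₁, F s) + ∫⁻ s in Ico t₁ t₂, F s) + ∫⁻ s in Icc t₂ T, F s :=
      calc ∫⁻ s in Icc (0:ℝ) T, F s
          ≤ ∫⁻ s in (Ico (0:ℝ) t₁ ∪ Ico t₁ t₂ ∪ Icc t₂ T), F s := lintegral_mono_set hsplit
        _ ≤ _ := le_trans (lintegral_union_le _ _ _)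
            (add_le_add_left (lintegral_union_le _ _ _) _)
    -- piece 1
    have hp1 : ∫⁻ s in Ico (0:ℝ) t₁, F s ≤
        ENNReal.ofReal (4*K^2*(t₂-t₁)^e * Ic)
          + ENNReal.ofReal (2*K^2*‖r₁-r₂‖^(2*β) * Jb) := by
      have hFb : ∀ s ∈ Ico (0:ℝ) t₁, F s ≤
          ENNReal.ofReal (4*K^2*(t₂-t₁)^e * (t₁-s)^(-cexp))
            + ENNReal.ofReal (2*K^2*‖r₁-r₂‖^(2*β) * (t₁-s)^(-b)) := by
        intro s hs
        have hτ : 0 < t₁ - s := by linarith [hs.2]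
        have hsIcc : s ∈ Icc (0:ℝ) T := ⟨hs.1, by linarith [hs.2, ht₁.2]⟩
        have hε0 : (0:ℝ) ≤ t₂ - t₁ := by linarith
        have h1 : (0:ℝ) ≤ 2*K*(t₂-t₁)^e*(t₁-s)^(-cexp) :=
          mul_nonneg (mul_nonneg (by linarith) (Real.rpow_nonneg hε0 _))
            (Real.rpow_nonneg hτ.le _)
        have h2 : (0:ℝ) ≤ K*(‖r₁-r₂‖^(2*β)*(t₁-s)^(-b)) :=
          mul_nonneg hK.le (mul_nonneg (Real.rpow_nonneg (norm_nonneg _) _)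
            (Real.rpow_nonneg hτ.le _))
        have hib := inner_bd (fun q => G t₂ s r₂ q - G t₁ s r₁ q)
          (2*K*(t₂-t₁)^e*(t₁-s)^(-cexp) + K*(‖r₁-r₂‖^(2*β)*(t₁-s)^(-b))) (2*K)
          (by linarith)
          (fun q hq => hsup1 t₁ t₂ s r₁ r₂ ht₁ ht₂ h12 hs hr₁ hr₂ q hq)
          (hdiff1 t₁ t₂ s r₁ r₂ ht₁ ht₂ hsIcc hr₁ hr₂)
        calc F s ≤ ENNReal.ofReal ((2*K*(t₂-t₁)^e*(t₁-s)^(-cexp)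
              + K*(‖r₁-r₂‖^(2*β)*(t₁-s)^(-b))) * (2*K)) := hib
          _ = ENNReal.ofReal (4*K^2*(t₂-t₁)^e * (t₁-s)^(-cexp)
              + 2*K^2*‖r₁-r₂‖^(2*β) * (t₁-s)^(-b)) := by ring_nf
          _ ≤ _ := ENNReal.ofReal_add_le
      have hmeas1 : Measurable fun s : ℝ =>
          ENNReal.ofReal (4*K^2*(t₂-t₁)^e * (t₁-s)^(-cexp)) :=
        (measurable_const.mul ((measurable_const.sub measurable_id).pow
          measurable_const)).ennreal_ofReal
      have hpa : ∫⁻ s in Ico (0:ℝ) t₁, ENNReal.ofReal (4*K^2*(t₂-t₁)^e * (t₁-s)^(-cexp))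
          ≤ ENNReal.ofReal (4*K^2*(t₂-t₁)^e * Ic) := by
        have hK' : (0:ℝ) ≤ 4*K^2*(t₂-t₁)^e :=
          mul_nonneg (by positivity) (Real.rpow_nonneg (by linarith) _)
        refine le_trans (aux_piece cexp _ 0 t₁ hc1 hK' ht₁.1) ?_
        apply ENNReal.ofReal_le_ofReal
        apply mul_le_mul_of_nonneg_left _ hK'
        rw [hIc_def, sub_zero]
        exact div_le_div_of_nonneg_right
          (Real.rpow_le_rpow ht₁.1 ht₁.2 (by linarith)) (by linarith)
      have hpb : ∫⁻ s in Ico (0:ℝ) t₁, ENNReal.ofReal (2*K^2*‖r₁-r₂‖^(2*β) * (t₁-s)^(-b))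
          ≤ ENNReal.ofReal (2*K^2*‖r₁-r₂‖^(2*β) * Jb) := by
        by_cases hd : d = 0
        · have hr12 : r₁ = r₂ := hrzero hd r₁ r₂
          have hz : ‖r₁ - r₂‖ ^ (2*β) = 0 := by
            rw [hr12, sub_self, norm_zero]
            exact Real.zero_rpow (by linarith)
          simp [hz]
        · have hb1 := hbd hd
          have hK' : (0:ℝ) ≤ 2*K^2*‖r₁-r₂‖^(2*β) :=
            mul_nonneg (by positivity) (Real.rpow_nonneg (norm_nonneg _) _)
          refine le_trans (aux_piece b _ 0 t₁ hb1 hK' ht₁.1) ?_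
          apply ENNReal.ofReal_le_ofReal
          apply mul_le_mul_of_nonneg_left _ hK'
          rw [hJb_def, sub_zero]
          refine le_trans ?_ (le_max_left _ _)
          exact div_le_div_of_nonneg_right
            (Real.rpow_le_rpow ht₁.1 ht₁.2 (by linarith)) (by linarith)
      calc ∫⁻ s in Ico (0:ℝ) t₁, F s
          ≤ ∫⁻ s in Ico (0:ℝ) t₁,
            (ENNReal.ofReal (4*K^2*(t₂-t₁)^e * (t₁-s)^(-cexp))
              + ENNReal.ofReal (2*K^2*‖r₁-r₂‖^(2*β) * (t₁-s)^(-b))) := by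
            apply lintegral_mono_ae
            filter_upwards [ae_restrict_mem measurableSet_Ico] with s hs using hFb s hs
        _ = (∫⁻ s in Ico (0:ℝ) t₁, ENNReal.ofReal (4*K^2*(t₂-t₁)^e * (t₁-s)^(-cexp)))
              + ∫⁻ s in Ico (0:ℝ) t₁, ENNReal.ofReal (2*K^2*‖r₁-r₂‖^(2*β) * (t₁-s)^(-b)) :=
            lintegral_add_left hmeas1 _
        _ ≤ _ := add_le_add hpa hpb
    -- piece 2
    have hp2 : ∫⁻ s in Ico t₁ t₂, F s ≤ ENNReal.ofReal (K^2 * ((t₂-t₁)^(1-a)/(1-a))) := by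
      have hFb : ∀ s ∈ Ico t₁ t₂, F s ≤ ENNReal.ofReal (K^2 * (t₂-s)^(-a)) := by
        intro s hs
        have hs0 : (0:ℝ) ≤ s := le_trans ht₁.1 hs.1
        have hsIcc : s ∈ Icc (0:ℝ) T := ⟨hs0, by linarith [hs.2, ht₂.2]⟩
        have hzero : ∀ q : Euc d, G t₁ s r₁ q = 0 := fun q => hGzero t₁ s hs.1 r₁ q
        have hsup : ∀ q ∈ O, |G t₂ s r₂ q - G t₁ s r₁ q| ≤ K * (t₂-s)^(-a) := by
          intro q hq
          rw [hzero q, sub_zero]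
          have h := hG2 s t₂ hs0 hs.2 ht₂.2 r₂ hr₂ q hq
          rwa [show -(d:ℝ)/γ = -a from by rw [ha_def]; ring] at h
        have hL1 : (∫⁻ q in O, (‖G t₂ s r₂ q - G t₁ s r₁ q‖₊ : ℝ≥0∞))
            ≤ ENNReal.ofReal K := by
          simp only [hzero, sub_zero]
          exact hG1 t₂ ht₂ s hsIcc r₂ hr₂
        have hS0 : (0:ℝ) ≤ K * (t₂-s)^(-a) :=
          mul_nonneg hK.le (Real.rpow_nonneg (by linarith [hs.2]) _)
        have hib := inner_bd (fun q => G t₂ s r₂ q - G t₁ s r₁ q) _ K hS0 hsup hL1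
        calc F s ≤ ENNReal.ofReal (K * (t₂-s)^(-a) * K) := hib
          _ = ENNReal.ofReal (K^2 * (t₂-s)^(-a)) := by ring_nf
      calc ∫⁻ s in Ico t₁ t₂, F s
          ≤ ∫⁻ s in Ico t₁ t₂, ENNReal.ofReal (K^2 * (t₂-s)^(-a)) := by
            apply lintegral_mono_ae
            filter_upwards [ae_restrict_mem measurableSet_Ico] with s hs using hFb s hs
        _ ≤ ENNReal.ofReal (K^2 * ((t₂-t₁)^(1-a)/(1-a))) :=
            aux_piece a (K^2) t₁ t₂ ha1 (sq_nonneg K) h12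
    -- piece 3
    have hp3 : ∫⁻ s in Icc t₂ T, F s = 0 := by
      have hz : ∀ s ∈ Icc t₂ T, F s = 0 := by
        intro s hs
        have h1 : ∀ q : Euc d, G t₂ s r₂ q = 0 := fun q => hGzero t₂ s hs.1 r₂ q
        have h2 : ∀ q : Euc d, G t₁ s r₁ q = 0 := fun q => hGzero t₁ s (le_trans h12 hs.1) r₁ q
        rw [hF_def]
        simp only [h1, h2, sub_zero, nnnorm_zero, ENNReal.coe_zero,
          ENNReal.zero_rpow_of_pos (by norm_num : (0:ℝ) < 2), lintegral_zero]
      rw [setLIntegral_congr_fun_ae measurableSet_Icc (ae_of_all _ hz), lintegral_zero]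
    -- combine
    have hA1 : 4*K^2*(t₂-t₁)^e * Ic ≤ (4*K^2*Ic * D₀^(e-2*α)) * Δ^(2*α) := by
      have h := aux_pow_bound (t₂-t₁) Δ D₀ e (2*α) (by linarith) hεΔ hΔD he2α.le he0
      calc 4*K^2*(t₂-t₁)^e * Ic ≤ 4*K^2*(D₀^(e-2*α) * Δ^(2*α)) * Ic :=
            mul_le_mul_of_nonneg_right
              (mul_le_mul_of_nonneg_left h (by positivity : (0:ℝ) ≤ 4*K^2)) hIc0
        _ = (4*K^2*Ic * D₀^(e-2*α)) * Δ^(2*α) := by ring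
    have hA2 : 2*K^2*‖r₁-r₂‖^(2*β) * Jb ≤ (2*K^2*Jb * D₀^(e-2*α)) * Δ^(2*α) := by
      have h := aux_pow_bound ‖r₁-r₂‖ Δ D₀ e (2*α) (norm_nonneg _) hrΔ hΔD he2α.le he0
      rw [h2βe]
      calc 2*K^2*‖r₁-r₂‖^e * Jb ≤ 2*K^2*(D₀^(e-2*α) * Δ^(2*α)) * Jb :=
            mul_le_mul_of_nonneg_right
              (mul_le_mul_of_nonneg_left h (by positivity : (0:ℝ) ≤ 2*K^2)) hJb0
        _ = (2*K^2*Jb * D₀^(e-2*α)) * Δ^(2*α) := by ring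
    have hA3 : K^2 * ((t₂-t₁)^(1-a)/(1-a)) ≤ ((K^2/(1-a)) * D₀^(2*A-2*α)) * Δ^(2*α) := by
      have h := aux_pow_bound (t₂-t₁) Δ D₀ (2*A) (2*α) (by linarith) hεΔ hΔD
        (by linarith) (by linarith)
      have hE : (t₂-t₁)^(1-a) = (t₂-t₁)^(2*A) := by rw [h2A1]
      rw [hE]
      calc K^2 * ((t₂-t₁)^(2*A)/(1-a))
          ≤ K^2 * ((D₀^(2*A-2*α) * Δ^(2*α))/(1-a)) := by
            apply mul_le_mul_of_nonneg_left _ (sq_nonneg K)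
            exact div_le_div_of_nonneg_right h (by linarith)
        _ = ((K^2/(1-a)) * D₀^(2*A-2*α)) * Δ^(2*α) := by ring
    have hsum : 4*K^2*(t₂-t₁)^e * Ic + 2*K^2*‖r₁-r₂‖^(2*β) * Jb
        + K^2 * ((t₂-t₁)^(1-a)/(1-a)) ≤ c₂ * Δ^(2*α) := by
      rw [hc₂_def]
      calc 4*K^2*(t₂-t₁)^e * Ic + 2*K^2*‖r₁-r₂‖^(2*β) * Jb + K^2 * ((t₂-t₁)^(1-a)/(1-a))
          ≤ (4*K^2*Ic * D₀^(e-2*α)) * Δ^(2*α) + (2*K^2*Jb * D₀^(e-2*α)) * Δ^(2*α)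
            + ((K^2/(1-a)) * D₀^(2*A-2*α)) * Δ^(2*α) := by
            exact add_le_add (add_le_add hA1 hA2) hA3
        _ = ((4*K^2*Ic + 2*K^2*Jb) * D₀ ^ (e - 2*α) + (K^2/(1-a)) * D₀ ^ (2*A - 2*α))
            * Δ^(2*α) := by ring
    have hnn1 : (0:ℝ) ≤ 4*K^2*(t₂-t₁)^e * Ic :=
      mul_nonneg (mul_nonneg (by positivity) (Real.rpow_nonneg (by linarith) _)) hIc0
    have hnn2 : (0:ℝ) ≤ 2*K^2*‖r₁-r₂‖^(2*β) * Jb :=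
      mul_nonneg (mul_nonneg (by positivity) (Real.rpow_nonneg (norm_nonneg _) _)) hJb0
    have hnn3 : (0:ℝ) ≤ K^2 * ((t₂-t₁)^(1-a)/(1-a)) :=
      mul_nonneg (sq_nonneg K) (div_nonneg (Real.rpow_nonneg (by linarith) _) (by linarith))
    calc ∫⁻ s in Icc (0:ℝ) T, F s
        ≤ ((∫⁻ s in Ico (0:ℝ) t₁, F s) + ∫⁻ s in Ico t₁ t₂, F s)
          + ∫⁻ s in Icc t₂ T, F s := hstep
      _ ≤ ((ENNReal.ofReal (4*K^2*(t₂-t₁)^e * Ic)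
            + ENNReal.ofReal (2*K^2*‖r₁-r₂‖^(2*β) * Jb))
            + ENNReal.ofReal (K^2 * ((t₂-t₁)^(1-a)/(1-a)))) + 0 := by
          exact add_le_add (add_le_add hp1 hp2) (le_of_eq hp3)
      _ = ENNReal.ofReal (4*K^2*(t₂-t₁)^e * Ic + 2*K^2*‖r₁-r₂‖^(2*β) * Jb
            + K^2 * ((t₂-t₁)^(1-a)/(1-a))) := by
          rw [add_zero, ← ENNReal.ofReal_add hnn1 hnn2, ← ENNReal.ofReal_add
            (add_nonneg hnn1 hnn2) hnn3]
      _ ≤ ENNReal.ofReal (c₂ * Δ^(2*α)) := ENNReal.ofReal_le_ofReal hsum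
  -- single-kernel L² bound
  set c₁ : ℝ := K^2 * (T^(1-a)/(1-a)) with hc₁_def
  have hc₁0 : 0 ≤ c₁ :=
    mul_nonneg (sq_nonneg K) (div_nonneg (Real.rpow_nonneg hT.le _) (by linarith))
  have L0 : ∀ t, t ∈ Icc (0:ℝ) T → ∀ r, r ∈ O →
      (∫⁻ s in Icc (0:ℝ) T, ∫⁻ q in O, (‖G t s r q‖₊:ℝ≥0∞)^(2:ℝ))
        ≤ ENNReal.ofReal c₁ := by
    intro t ht r hr
    have hsplit : Icc (0:ℝ) T ⊆ Ico 0 t ∪ Icc t T := by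
      intro s hs
      rcases lt_or_ge s t with h|h
      · exact Or.inl ⟨hs.1, h⟩
      · exact Or.inr ⟨h, hs.2⟩
    set F := fun s => ∫⁻ q in O, (‖G t s r q‖₊:ℝ≥0∞)^(2:ℝ) with hF
    have hp1 : ∫⁻ s in Ico (0:ℝ) t, F s ≤ ENNReal.ofReal (K^2 * (t^(1-a)/(1-a))) := by
      have hFb : ∀ s ∈ Ico (0:ℝ) t, F s ≤ ENNReal.ofReal (K^2 * (t-s)^(-a)) := by
        intro s hs
        have hsIcc : s ∈ Icc (0:ℝ) T := ⟨hs.1, le_trans (le_of_lt hs.2) ht.2⟩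
        have hsup : ∀ q ∈ O, |G t s r q| ≤ K*(t-s)^(-a) := by
          intro q hq
          have h := hG2 s t hs.1 hs.2 ht.2 r hr q hq
          rwa [show -(d:ℝ)/γ = -a from by rw [ha_def]; ring] at h
        have hS0 : (0:ℝ) ≤ K*(t-s)^(-a) :=
          mul_nonneg hK.le (Real.rpow_nonneg (by linarith [hs.2]) _)
        have hib := inner_bd (fun q => G t s r q) _ K hS0 hsup (hG1 t ht s hsIcc r hr)
        calc F s ≤ ENNReal.ofReal (K*(t-s)^(-a)*K) := hib
          _ = ENNReal.ofReal (K^2*(t-s)^(-a)) := by ring_nf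
      calc ∫⁻ s in Ico (0:ℝ) t, F s
          ≤ ∫⁻ s in Ico (0:ℝ) t, ENNReal.ofReal (K^2*(t-s)^(-a)) := by
            apply lintegral_mono_ae
            filter_upwards [ae_restrict_mem measurableSet_Ico] with s hs using hFb s hs
        _ ≤ ENNReal.ofReal (K^2 * ((t-0)^(1-a)/(1-a))) :=
            aux_piece a (K^2) 0 t ha1 (sq_nonneg K) ht.1
        _ = ENNReal.ofReal (K^2 * (t^(1-a)/(1-a))) := by rw [sub_zero]
    have hp2 : ∫⁻ s in Icc t T, F s = 0 := by
      have hz : ∀ s ∈ Icc t T, F s = 0 := by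
        intro s hs
        rw [hF]
        simp only [hGzero t s hs.1 r, nnnorm_zero, ENNReal.coe_zero,
          ENNReal.zero_rpow_of_pos (by norm_num : (0:ℝ) < 2), lintegral_zero]
      rw [setLIntegral_congr_fun_ae measurableSet_Icc (ae_of_all _ hz), lintegral_zero]
    calc ∫⁻ s in Icc (0:ℝ) T, F s
        ≤ (∫⁻ s in Ico (0:ℝ) t, F s) + ∫⁻ s in Icc t T, F s :=
          le_trans (lintegral_mono_set hsplit) (lintegral_union_le _ _ _)
      _ ≤ ENNReal.ofReal (K^2 * (t^(1-a)/(1-a))) + 0 := add_le_add hp1 (le_of_eq hp2)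
      _ ≤ ENNReal.ofReal c₁ := by
          rw [add_zero, hc₁_def]
          apply ENNReal.ofReal_le_ofReal
          apply mul_le_mul_of_nonneg_left _ (sq_nonneg K)
          exact div_le_div_of_nonneg_right
            (Real.rpow_le_rpow ht.1 ht.2 (by linarith)) (by linarith)
  -- product measure facts
  have hae : ∀ᵐ p ∂π, p.1 ∈ Icc (0:ℝ) T ∧ p.2 ∈ O := by
    rw [hπ_def, hμ_def, hν_def, Measure.prod_restrict]
    filter_upwards [ae_restrict_mem (measurableSet_Icc.prod hOmeas)] with p hp
    exact ⟨hp.1, hp.2⟩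
  have hprod : ∀ w : ℝ × Euc d → ℝ, Measurable w →
      ∫⁻ p, (‖w p‖₊:ℝ≥0∞) ^ (2:ℝ) ∂π
        = ∫⁻ s in Icc (0:ℝ) T, ∫⁻ q in O, (‖w (s,q)‖₊:ℝ≥0∞)^(2:ℝ) := by
    intro w hw
    have hm : Measurable fun p => (‖w p‖₊:ℝ≥0∞)^(2:ℝ) := by
      simp_rw [aux_sq]
      exact (hw.nnnorm.coe_nnreal_ennreal).mul (hw.nnnorm.coe_nnreal_ennreal)
    rw [hπ_def]
    exact lintegral_prod _ hm.aemeasurable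
  -- multiply by f and pass to product measure
  have hmul : ∀ w : ℝ × Euc d → ℝ, Measurable w → ∀ B : ℝ, 0 ≤ B →
      (∫⁻ s in Icc (0:ℝ) T, ∫⁻ q in O, (‖w (s,q)‖₊:ℝ≥0∞)^(2:ℝ)) ≤ ENNReal.ofReal B →
      ∫⁻ p, (‖w p * f p.1 p.2‖₊:ℝ≥0∞)^(2:ℝ) ∂π ≤ ENNReal.ofReal (C^2 * B) := by
    intro w hw B hB hIB
    calc ∫⁻ p, (‖w p * f p.1 p.2‖₊:ℝ≥0∞)^(2:ℝ) ∂π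
        ≤ ∫⁻ p, (ENNReal.ofReal C)^(2:ℝ) * (‖w p‖₊:ℝ≥0∞)^(2:ℝ) ∂π := by
          apply lintegral_mono_ae
          filter_upwards [hae] with p hp
          have h1 : (‖w p * f p.1 p.2‖₊:ℝ≥0∞) ≤ (‖w p‖₊:ℝ≥0∞) * ENNReal.ofReal C := by
            rw [nnnorm_mul, ENNReal.coe_mul]
            apply mul_le_mul_right
            rw [← enorm_eq_nnnorm, ← ofReal_norm, Real.norm_eq_abs]
            exact ENNReal.ofReal_le_ofReal (hfbdd p.1 hp.1 p.2 hp.2)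
          calc (‖w p * f p.1 p.2‖₊:ℝ≥0∞)^(2:ℝ)
              ≤ ((‖w p‖₊:ℝ≥0∞) * ENNReal.ofReal C)^(2:ℝ) :=
                ENNReal.rpow_le_rpow h1 (by norm_num)
            _ = (ENNReal.ofReal C)^(2:ℝ) * (‖w p‖₊:ℝ≥0∞)^(2:ℝ) := by
                rw [ENNReal.mul_rpow_of_nonneg _ _ (by norm_num)]; ring
      _ = (ENNReal.ofReal C)^(2:ℝ) * ∫⁻ p, (‖w p‖₊:ℝ≥0∞)^(2:ℝ) ∂π :=
          lintegral_const_mul' _ _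
            (ENNReal.rpow_ne_top_of_nonneg (by norm_num) ENNReal.ofReal_ne_top)
      _ ≤ (ENNReal.ofReal C)^(2:ℝ) * ENNReal.ofReal B := by
          apply mul_le_mul_right
          rw [hprod w hw]
          exact hIB
      _ = ENNReal.ofReal (C^2*B) := by
          rw [ENNReal.ofReal_rpow_of_nonneg hC0 (by norm_num),
            ← ENNReal.ofReal_mul (by positivity)]
          norm_num [Real.rpow_natCast]
  -- L² bound for u over the product measure
  have hu2 : ∫⁻ p, (‖u p.1 p.2‖₊:ℝ≥0∞)^(2:ℝ) ∂π ≤ ENNReal.ofReal M' := by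
    have hmu : AEMeasurable (fun p : ℝ × Euc d => (‖u p.1 p.2‖₊:ℝ≥0∞)) π := huL2.1.enorm
    have hm2 : AEMeasurable (fun p : ℝ × Euc d => (‖u p.1 p.2‖₊:ℝ≥0∞)^(2:ℝ)) π := by
      simp_rw [aux_sq]
      exact hmu.mul hmu
    calc ∫⁻ p, (‖u p.1 p.2‖₊:ℝ≥0∞)^(2:ℝ) ∂π
        = ∫⁻ s in Icc (0:ℝ) T, ∫⁻ q in O, (‖u s q‖₊:ℝ≥0∞)^(2:ℝ) := by
          rw [hπ_def]
          exact lintegral_prod _ hm2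
      _ = energy O T u := by
          rw [energy]
          simp_rw [aux_sq, pow_two]
      _ ≤ ENNReal.ofReal M' := huM'
  -- Cauchy–Schwarz
  have hCS : ∀ v : ℝ × Euc d → ℝ, Measurable v →
      (∫⁻ p, (‖v p * u p.1 p.2‖₊ : ℝ≥0∞) ∂π) ≤
        (∫⁻ p, (‖v p‖₊ : ℝ≥0∞) ^ (2:ℝ) ∂π) ^ (1/2:ℝ) * (ENNReal.ofReal M') ^ (1/2:ℝ) := by
    intro v hv
    have hmv : AEMeasurable (fun p => (‖v p‖₊:ℝ≥0∞)) π :=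
      hv.nnnorm.coe_nnreal_ennreal.aemeasurable
    have hmu : AEMeasurable (fun p : ℝ × Euc d => (‖u p.1 p.2‖₊:ℝ≥0∞)) π := huL2.1.enorm
    calc ∫⁻ p, (‖v p * u p.1 p.2‖₊ : ℝ≥0∞) ∂π
        = ∫⁻ p, ((fun p => (‖v p‖₊:ℝ≥0∞)) * fun p : ℝ × Euc d => (‖u p.1 p.2‖₊:ℝ≥0∞)) p ∂π := by
          simp_rw [Pi.mul_apply, nnnorm_mul, ENNReal.coe_mul]
      _ ≤ (∫⁻ p, (‖v p‖₊:ℝ≥0∞)^(2:ℝ) ∂π)^(1/2:ℝ)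
            * (∫⁻ p, (‖u p.1 p.2‖₊:ℝ≥0∞)^(2:ℝ) ∂π)^(1/2:ℝ) :=
          ENNReal.lintegral_mul_le_Lp_mul_Lq π ⟨by norm_num, by norm_num, by norm_num⟩ hmv hmu
      _ ≤ _ := mul_le_mul_right (ENNReal.rpow_le_rpow hu2 (by norm_num)) _
  -- integrability
  have hInt : ∀ t, t ∈ Icc (0:ℝ) T → ∀ r, r ∈ O →
      Integrable (fun p : ℝ × Euc d => G t p.1 r p.2 * f p.1 p.2 * u p.1 p.2) π := by
    intro t ht r hr
    have hvmeas : Measurable fun p : ℝ × Euc d => G t p.1 r p.2 * f p.1 p.2 :=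
      (mG t r).mul hfmeas
    refine ⟨(hvmeas.aestronglyMeasurable).mul huL2.1, ?_⟩
    have hb1 : ∫⁻ p, (‖G t p.1 r p.2 * f p.1 p.2‖₊:ℝ≥0∞)^(2:ℝ) ∂π
        ≤ ENNReal.ofReal (C^2*c₁) := by
      apply hmul _ (mG t r) c₁ hc₁0
      exact L0 t ht r hr
    show (∫⁻ p, (‖G t p.1 r p.2 * f p.1 p.2 * u p.1 p.2‖₊:ℝ≥0∞) ∂π) < ⊤
    calc ∫⁻ p, (‖G t p.1 r p.2 * f p.1 p.2 * u p.1 p.2‖₊:ℝ≥0∞) ∂π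
        ≤ (∫⁻ p, (‖G t p.1 r p.2 * f p.1 p.2‖₊ : ℝ≥0∞) ^ (2:ℝ) ∂π) ^ (1/2:ℝ)
            * (ENNReal.ofReal M') ^ (1/2:ℝ) := hCS _ hvmeas
      _ ≤ (ENNReal.ofReal (C^2*c₁)) ^ (1/2:ℝ) * (ENNReal.ofReal M') ^ (1/2:ℝ) :=
          mul_le_mul_left (ENNReal.rpow_le_rpow hb1 (by norm_num)) _
      _ < ⊤ := ENNReal.mul_lt_top
          (ENNReal.rpow_lt_top_of_nonneg (by norm_num) ENNReal.ofReal_ne_top)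
          (ENNReal.rpow_lt_top_of_nonneg (by norm_num) ENNReal.ofReal_ne_top)
  -- representation of Ψ as a product integral
  have hrep : ∀ t, t ∈ Icc (0:ℝ) T → ∀ r, r ∈ O →
      Ψ t r = ∫ p, G t p.1 r p.2 * f p.1 p.2 * u p.1 p.2 ∂π := by
    intro t ht r hr
    have hint := hInt t ht r hr
    rw [hπ_def] at hint
    rw [hπ_def, integral_prod _ hint, hΨ t r]
    have hvan : EqOn (fun s => ∫ q in O, G t s r q * f s q * u s q)
        ((Icc (0:ℝ) t).indicator (fun s => ∫ q in O, G t s r q * f s q * u s q))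
        (Icc (0:ℝ) T) := by
      intro s hs
      by_cases h : s ∈ Icc (0:ℝ) t
      · rw [indicator_of_mem h]
      · rw [indicator_of_notMem h]
        have hts : t ≤ s := by
          rcases le_or_gt s t with hst | hst
          · exact absurd ⟨hs.1, hst⟩ h
          · exact hst.le
        simp [hGzero t s hts]
    rw [setIntegral_congr_fun measurableSet_Icc hvan, setIntegral_indicator measurableSet_Icc]
    rw [inter_eq_right.mpr (Icc_subset_Icc le_rfl ht.2)]
  -- final constant
  set cF : ℝ := (C^2*c₂)^(1/2:ℝ) * M'^(1/2:ℝ) with hcF_def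
  have hcF0 : 0 ≤ cF :=
    mul_nonneg (Real.rpow_nonneg (mul_nonneg (sq_nonneg C) hc₂0) _)
      (Real.rpow_nonneg hM'0 _)
  have key : ∀ t₁, t₁ ∈ Icc (0:ℝ) T → ∀ t₂, t₂ ∈ Icc (0:ℝ) T → t₁ ≤ t₂ →
      ∀ r₁, r₁ ∈ O → ∀ r₂, r₂ ∈ O →
      |Ψ t₂ r₂ - Ψ t₁ r₁| ≤ cF * Real.sqrt ((t₁ - t₂)^2 + ‖r₁ - r₂‖^2) ^ α := by
    intro t₁ ht₁ t₂ ht₂ h12 r₁ hr₁ r₂ hr₂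
    set Δ := Real.sqrt ((t₁ - t₂)^2 + ‖r₁ - r₂‖^2) with hΔ_def
    have hΔ0 : 0 ≤ Δ := Real.sqrt_nonneg _
    have hint₁ := hInt t₁ ht₁ r₁ hr₁
    have hint₂ := hInt t₂ ht₂ r₂ hr₂
    have hw : Measurable fun p : ℝ × Euc d => G t₂ p.1 r₂ p.2 - G t₁ p.1 r₁ p.2 :=
      (mG t₂ r₂).sub (mG t₁ r₁)
    have hwf : Measurable
        fun p : ℝ × Euc d => (G t₂ p.1 r₂ p.2 - G t₁ p.1 r₁ p.2) * f p.1 p.2 :=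
      hw.mul hfmeas
    have hX0 : (0:ℝ) ≤ C^2*(c₂ * Δ^(2*α)) :=
      mul_nonneg (sq_nonneg C) (mul_nonneg hc₂0 (Real.rpow_nonneg hΔ0 _))
    have hest := hmul _ hw (c₂ * Δ^(2*α)) (mul_nonneg hc₂0 (Real.rpow_nonneg hΔ0 _))
      (EST t₁ t₂ r₁ r₂ ht₁ ht₂ h12 hr₁ hr₂)
    have hbound : ∫⁻ p, (‖((G t₂ p.1 r₂ p.2 - G t₁ p.1 r₁ p.2) * f p.1 p.2)
          * u p.1 p.2‖₊:ℝ≥0∞) ∂π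
        ≤ ENNReal.ofReal ((C^2*(c₂ * Δ^(2*α)))^(1/2:ℝ) * M'^(1/2:ℝ)) := by
      refine le_trans (hCS _ hwf) ?_
      refine le_trans (mul_le_mul_left (ENNReal.rpow_le_rpow hest (by norm_num)) _) ?_
      rw [ENNReal.ofReal_rpow_of_nonneg hX0 (by norm_num),
        ENNReal.ofReal_rpow_of_nonneg hM'0 (by norm_num),
        ← ENNReal.ofReal_mul (Real.rpow_nonneg hX0 _)]
    have hrepr : Ψ t₂ r₂ - Ψ t₁ r₁ = ∫ p, (G t₂ p.1 r₂ p.2 * f p.1 p.2 * u p.1 p.2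
        - G t₁ p.1 r₁ p.2 * f p.1 p.2 * u p.1 p.2) ∂π := by
      rw [hrep t₂ ht₂ r₂ hr₂, hrep t₁ ht₁ r₁ hr₁, ← integral_sub hint₂ hint₁]
    calc |Ψ t₂ r₂ - Ψ t₁ r₁|
        = ‖∫ p, (G t₂ p.1 r₂ p.2 * f p.1 p.2 * u p.1 p.2
            - G t₁ p.1 r₁ p.2 * f p.1 p.2 * u p.1 p.2) ∂π‖ := by
          rw [hrepr, Real.norm_eq_abs]
      _ ≤ ∫ p, ‖G t₂ p.1 r₂ p.2 * f p.1 p.2 * u p.1 p.2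
            - G t₁ p.1 r₁ p.2 * f p.1 p.2 * u p.1 p.2‖ ∂π := norm_integral_le_integral_norm _
      _ = (∫⁻ p, (‖G t₂ p.1 r₂ p.2 * f p.1 p.2 * u p.1 p.2
            - G t₁ p.1 r₁ p.2 * f p.1 p.2 * u p.1 p.2‖₊:ℝ≥0∞) ∂π).toReal :=
          integral_norm_eq_lintegral_enorm (hint₂.1.sub hint₁.1)
      _ = (∫⁻ p, (‖((G t₂ p.1 r₂ p.2 - G t₁ p.1 r₁ p.2) * f p.1 p.2)
            * u p.1 p.2‖₊:ℝ≥0∞) ∂π).toReal := by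
          congr 1
          apply lintegral_congr
          intro p
          congr 1
          congr 1
          ring
      _ ≤ (ENNReal.ofReal ((C^2*(c₂ * Δ^(2*α)))^(1/2:ℝ) * M'^(1/2:ℝ))).toReal :=
          ENNReal.toReal_mono ENNReal.ofReal_ne_top hbound
      _ = (C^2*(c₂ * Δ^(2*α)))^(1/2:ℝ) * M'^(1/2:ℝ) :=
          ENNReal.toReal_ofReal
            (mul_nonneg (Real.rpow_nonneg hX0 _) (Real.rpow_nonneg hM'0 _))
      _ = cF * Δ ^ α := by
          rw [hcF_def, show C^2*(c₂ * Δ^(2*α)) = (C^2*c₂) * Δ^(2*α) from by ring,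
            Real.mul_rpow (mul_nonneg (sq_nonneg C) hc₂0) (Real.rpow_nonneg hΔ0 _),
            ← Real.rpow_mul hΔ0, show (2*α)*(1/2:ℝ) = α from by ring]
          ring
  refine ⟨cF, hcF0, ?_⟩
  intro t₁ ht₁ t₂ ht₂ r₁ hr₁ r₂ hr₂
  rcases le_total t₁ t₂ with h|h
  · exact key t₁ ht₁ t₂ ht₂ h r₁ hr₁ r₂ hr₂
  · have hk := key t₂ ht₂ t₁ ht₁ h r₂ hr₂ r₁ hr₁
    rw [abs_sub_comm]
    rw [show (t₁-t₂)^2 = (t₂-t₁)^2 from by ring, norm_sub_rev r₁ r₂]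
    exact hk






end
end

section
/- Let M < ∞, let u ∈ L²([0,T]×O) with ∫_{[0,T]×O} u² ≤ M, and let Y, Z : [0,T]×O → ℝ be bounded measurable functions. Then for all (t,r) ∈ [0,T]×O: |∫₀^t ∫_O G(t,s,r,q)(F(s,q,Y(s,q)) − F(s,q,Z(s,q))) u(s,q) dq ds| ≤ K² √M (γ/(γ−d))^{1/2} T^{(γ−d)/(2γ)} · sup_{(s,q)∈[0,T]×O} |Y(s,q) − Z(s,q)|. -/
open MeasureTheory Filter Set Topology
open scoped ENNReal NNReal

noncomputable section

/-- **Explicit Lipschitz-type bound for the controlled convolution.**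
For bounded measurable `Y`, `Z` and `u` with `∫_{[0,T]×O} u² ≤ M`,
`|∫₀^t ∫_O G(t,s,r,q)(F(s,q,Y(s,q)) − F(s,q,Z(s,q))) u(s,q) dq ds|
  ≤ K² √M (γ/(γ−d))^{1/2} T^{(γ−d)/(2γ)} · sup_{[0,T]×O} |Y − Z|`
(every upper bound `S ≥ 0` of `|Y−Z|` on `[0,T]×O` works on the right). -/
theorem stmt_14
    {d : ℕ} (O : Set (Euc d)) (hOopen : IsOpen O) (hObdd : Bornology.IsBounded O)
    (T K γ : ℝ) (hT : 0 < T) (hK : 0 < K) (hγ : (d : ℝ) < γ)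
    (G : ℝ → ℝ → Euc d → Euc d → ℝ)
    (hGmeas : Measurable fun p : (ℝ × ℝ) × Euc d × Euc d => G p.1.1 p.1.2 p.2.1 p.2.2)
    (hGzero : ∀ t s : ℝ, t ≤ s → ∀ r q : Euc d, G t s r q = 0)
    (hG1 : ∀ t ∈ Icc (0:ℝ) T, ∀ s ∈ Icc (0:ℝ) T, ∀ r ∈ O,
      (∫⁻ q in O, (‖G t s r q‖₊ : ℝ≥0∞)) ≤ ENNReal.ofReal K)
    (hG2 : ∀ s t : ℝ, 0 ≤ s → s < t → t ≤ T → ∀ r ∈ O, ∀ q ∈ O,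
      |G t s r q| ≤ K * (t - s) ^ (-(d : ℝ) / γ))
    (F : ℝ → Euc d → ℝ → ℝ)
    (hFmeas : Measurable fun p : ℝ × Euc d × ℝ => F p.1 p.2.1 p.2.2)
    (hFLip : ∀ t ∈ Icc (0:ℝ) T, ∀ r ∈ O, ∀ x y : ℝ,
      |F t r x - F t r y| ≤ K * |x - y|)
    (M : ℝ) (hM : 0 ≤ M)
    (u : ℝ → Euc d → ℝ) (huL2 : MemL2 O T u)
    (huM : energy O T u ≤ ENNReal.ofReal M)
    (Y Z : ℝ → Euc d → ℝ)
    (hYmeas : Measurable fun p : ℝ × Euc d => Y p.1 p.2)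
    (hZmeas : Measurable fun p : ℝ × Euc d => Z p.1 p.2)
    (hYbdd : ∃ B : ℝ, ∀ s ∈ Icc (0:ℝ) T, ∀ q ∈ O, |Y s q| ≤ B)
    (hZbdd : ∃ B : ℝ, ∀ s ∈ Icc (0:ℝ) T, ∀ q ∈ O, |Z s q| ≤ B) :
    ∀ S : ℝ, 0 ≤ S → (∀ s ∈ Icc (0:ℝ) T, ∀ q ∈ O, |Y s q - Z s q| ≤ S) →
      ∀ t ∈ Icc (0:ℝ) T, ∀ r ∈ O,
        |∫ s in Icc (0:ℝ) t, ∫ q in O,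
            G t s r q * (F s q (Y s q) - F s q (Z s q)) * u s q| ≤
          K ^ 2 * Real.sqrt M * Real.sqrt (γ / (γ - d)) *
            T ^ ((γ - (d : ℝ)) / (2 * γ)) * S := by
  intro S hS hYZ t ht r hr
  have hd0 : (0:ℝ) ≤ d := Nat.cast_nonneg d
  have hγ0 : (0:ℝ) < γ := lt_of_le_of_lt hd0 hγ
  have hγd : (0:ℝ) < γ - d := sub_pos.2 hγ
  set p : ℝ := -(d:ℝ)/γ with hpdef
  have hpgt : (-1:ℝ) < p := by
    rw [hpdef, neg_div]
    exact neg_lt_neg ((div_lt_one hγ0).2 hγ)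
  have hp1 : (0:ℝ) < p + 1 := by linarith
  have ht0 : 0 ≤ t := ht.1
  have htT : t ≤ T := ht.2
  have hsub : Icc (0:ℝ) t ⊆ Icc (0:ℝ) T := Icc_subset_Icc le_rfl htT
  have hOmeas : MeasurableSet O := hOopen.measurableSet
  have hEnergy := huM
  unfold energy at hEnergy
  set μt := (volume : Measure ℝ).restrict (Icc (0:ℝ) t) with hμt
  set ν := (volume : Measure (Euc d)).restrict O with hν
  -- measurability facts
  have hGm : Measurable fun z : ℝ × Euc d => G t z.1 r z.2 :=
    hGmeas.comp ((measurable_const.prodMk measurable_fst).prodMk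
      (measurable_const.prodMk measurable_snd))
  have hup : AEMeasurable (fun z : ℝ × Euc d => u z.1 z.2) (μt.prod ν) := by
    have h1 : AEMeasurable (fun z : ℝ × Euc d => u z.1 z.2)
        (((volume : Measure ℝ).restrict (Icc (0:ℝ) T)).prod ν) := huL2.1.aemeasurable
    have h2 : μt.prod ν
        = (((volume : Measure ℝ).restrict (Icc (0:ℝ) T)).prod ν).restrict
            (Icc (0:ℝ) t ×ˢ O) := by
      rw [hμt, hν, Measure.prod_restrict, Measure.prod_restrict,
        Measure.restrict_restrict (measurableSet_Icc.prod hOmeas),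
        inter_eq_self_of_subset_left (prod_mono hsub subset_rfl)]
    rw [h2]
    exact h1.restrict
  -- pointwise Lipschitz bound
  have hF_bd : ∀ s ∈ Icc (0:ℝ) t, ∀ q ∈ O,
      (‖G t s r q * (F s q (Y s q) - F s q (Z s q)) * u s q‖₊ : ℝ≥0∞)
        ≤ ENNReal.ofReal (K * S) * ((‖G t s r q‖₊ : ℝ≥0∞) * ‖u s q‖₊) := by
    intro s hs q hq
    have hFle : |F s q (Y s q) - F s q (Z s q)| ≤ K * S :=
      (hFLip s (hsub hs) q hq _ _).trans
        (mul_le_mul_of_nonneg_left (hYZ s (hsub hs) q hq) hK.le)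
    have h1 : (‖F s q (Y s q) - F s q (Z s q)‖₊ : ℝ≥0∞) ≤ ENNReal.ofReal (K * S) := by
      rw [← enorm_eq_nnnorm, ← ofReal_norm, Real.norm_eq_abs]
      exact ENNReal.ofReal_le_ofReal hFle
    calc (‖G t s r q * (F s q (Y s q) - F s q (Z s q)) * u s q‖₊ : ℝ≥0∞)
        = (‖F s q (Y s q) - F s q (Z s q)‖₊ : ℝ≥0∞)
            * ((‖G t s r q‖₊ : ℝ≥0∞) * ‖u s q‖₊) := by
          push_cast [nnnorm_mul]
          ring
      _ ≤ ENNReal.ofReal (K * S) * ((‖G t s r q‖₊ : ℝ≥0∞) * ‖u s q‖₊) :=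
          mul_le_mul_left h1 _
  -- pointwise bound on G
  have hGbd : ∀ s ∈ Icc (0:ℝ) t, ∀ q ∈ O, |G t s r q| ≤ K * (t - s) ^ p := by
    intro s hs q hq
    rcases lt_or_eq_of_le hs.2 with h | h
    · exact hG2 s t hs.1 h htT r hr q hq
    · rw [h, hGzero t t le_rfl r q, abs_zero, sub_self]
      exact mul_nonneg hK.le (Real.rpow_nonneg le_rfl p)
  -- the time integral
  have hii : IntervalIntegrable (fun s : ℝ => (t - s) ^ p) volume 0 t := by
    have := (intervalIntegral.intervalIntegrable_rpow' (a := t) (b := 0) hpgt).comp_sub_left t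
    simpa using this
  have hInt : IntegrableOn (fun s : ℝ => (t - s) ^ p) (Icc (0:ℝ) t) volume := by
    rw [← uIcc_of_le ht0]
    exact (intervalIntegrable_iff' (f := fun s : ℝ => (t - s) ^ p) (μ := volume)).1 hii
  set C : ℝ := ∫ s in Icc (0:ℝ) t, (t - s) ^ p with hCdef
  have hCval : C = t ^ (p + 1) / (p + 1) := by
    rw [hCdef, integral_Icc_eq_integral_Ioc, ← intervalIntegral.integral_of_le ht0,
      intervalIntegral.integral_comp_sub_left (fun x : ℝ => x ^ p) t]
    simp only [sub_self, sub_zero]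
    rw [integral_rpow (Or.inl hpgt), Real.zero_rpow (ne_of_gt hp1), sub_zero]
  have hCnonneg : 0 ≤ C := by
    rw [hCval]
    exact div_nonneg (Real.rpow_nonneg ht0 _) hp1.le
  -- bound on ∫∫ G²
  have hGsq : (∫⁻ z, ((‖G t z.1 r z.2‖₊ : ℝ≥0∞)) ^ 2 ∂(μt.prod ν))
      ≤ ENNReal.ofReal (K ^ 2 * C) := by
    rw [lintegral_prod (fun z : ℝ × Euc d => (‖G t z.1 r z.2‖₊ : ℝ≥0∞) ^ 2) (hGm.enorm.pow_const 2).aemeasurable]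
    have inner : ∀ s ∈ Icc (0:ℝ) t,
        (∫⁻ q, ((‖G t s r q‖₊ : ℝ≥0∞)) ^ 2 ∂ν) ≤ ENNReal.ofReal (K ^ 2 * (t - s) ^ p) := by
      intro s hs
      have step : (∫⁻ q, ((‖G t s r q‖₊ : ℝ≥0∞)) ^ 2 ∂ν)
          ≤ ∫⁻ q, ENNReal.ofReal (K * (t - s) ^ p) * (‖G t s r q‖₊ : ℝ≥0∞) ∂ν := by
        refine lintegral_mono_ae (ae_restrict_of_forall_mem hOmeas fun q hq => ?_)
        rw [pow_two]
        refine mul_le_mul_left ?_ _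
        rw [← enorm_eq_nnnorm, ← ofReal_norm, Real.norm_eq_abs]
        exact ENNReal.ofReal_le_ofReal (hGbd s hs q hq)
      refine step.trans ?_
      rw [lintegral_const_mul' _ _ ENNReal.ofReal_ne_top]
      calc ENNReal.ofReal (K * (t - s) ^ p) * ∫⁻ q, (‖G t s r q‖₊ : ℝ≥0∞) ∂ν
          ≤ ENNReal.ofReal (K * (t - s) ^ p) * ENNReal.ofReal K :=
            mul_le_mul_right (hG1 t ht s (hsub hs) r hr) _
        _ = ENNReal.ofReal (K ^ 2 * (t - s) ^ p) := by
            rw [← ENNReal.ofReal_mul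
              (mul_nonneg hK.le (Real.rpow_nonneg (sub_nonneg.2 hs.2) p))]
            congr 1
            ring
    calc (∫⁻ s, ∫⁻ q, ((‖G t s r q‖₊ : ℝ≥0∞)) ^ 2 ∂ν ∂μt)
        ≤ ∫⁻ s, ENNReal.ofReal (K ^ 2 * (t - s) ^ p) ∂μt :=
          lintegral_mono_ae (ae_restrict_of_forall_mem measurableSet_Icc inner)
      _ = ENNReal.ofReal (∫ s in Icc (0:ℝ) t, K ^ 2 * (t - s) ^ p) := by
          rw [← ofReal_integral_eq_lintegral_ofReal (hInt.const_mul _)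
            (ae_restrict_of_forall_mem measurableSet_Icc fun s hs =>
              mul_nonneg (sq_nonneg K) (Real.rpow_nonneg (sub_nonneg.2 hs.2) p))]
      _ = ENNReal.ofReal (K ^ 2 * C) := by
          rw [integral_const_mul, ← hCdef]
  -- bound on ∫∫ u²
  have husq : (∫⁻ z, ((‖u z.1 z.2‖₊ : ℝ≥0∞)) ^ 2 ∂(μt.prod ν)) ≤ ENNReal.ofReal M := by
    rw [lintegral_prod (fun z : ℝ × Euc d => (‖u z.1 z.2‖₊ : ℝ≥0∞) ^ 2) (hup.enorm.pow_const 2)]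
    exact (lintegral_mono_set hsub).trans hEnergy
  -- Cauchy-Schwarz
  have hCS : (∫⁻ z, (‖G t z.1 r z.2‖₊ : ℝ≥0∞) * (‖u z.1 z.2‖₊ : ℝ≥0∞) ∂(μt.prod ν))
      ≤ (∫⁻ z, ((‖G t z.1 r z.2‖₊ : ℝ≥0∞)) ^ (2:ℝ) ∂(μt.prod ν)) ^ (1/2 : ℝ)
        * (∫⁻ z, ((‖u z.1 z.2‖₊ : ℝ≥0∞)) ^ (2:ℝ) ∂(μt.prod ν)) ^ (1/2 : ℝ) :=
    ENNReal.lintegral_mul_le_Lp_mul_Lq _ Real.HolderConjugate.two_two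
      hGm.enorm.aemeasurable hup.enorm
  have h2cast : ∀ x : ℝ≥0∞, x ^ (2:ℝ) = x ^ 2 := fun x => by
    rw [show (2:ℝ) = ((2:ℕ):ℝ) by norm_num, ENNReal.rpow_natCast]
  simp_rw [h2cast] at hCS
  -- the key estimate in ℝ≥0∞
  have key : (∫⁻ s, ENNReal.ofReal
        ‖∫ q in O, G t s r q * (F s q (Y s q) - F s q (Z s q)) * u s q‖ ∂μt)
      ≤ ENNReal.ofReal (K * S * (K * Real.sqrt C) * Real.sqrt M) := by
    calc (∫⁻ s, ENNReal.ofReal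
            ‖∫ q in O, G t s r q * (F s q (Y s q) - F s q (Z s q)) * u s q‖ ∂μt)
        ≤ ∫⁻ s, ∫⁻ q, (‖G t s r q * (F s q (Y s q) - F s q (Z s q)) * u s q‖₊ : ℝ≥0∞)
            ∂ν ∂μt := by
          refine lintegral_mono fun s => ?_
          calc ENNReal.ofReal ‖∫ q in O, G t s r q * (F s q (Y s q) - F s q (Z s q)) * u s q‖
              ≤ ENNReal.ofReal ((∫⁻ q, ENNReal.ofReal
                  ‖G t s r q * (F s q (Y s q) - F s q (Z s q)) * u s q‖ ∂ν).toReal) :=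
                ENNReal.ofReal_le_ofReal (norm_integral_le_lintegral_norm _)
            _ ≤ ∫⁻ q, ENNReal.ofReal
                  ‖G t s r q * (F s q (Y s q) - F s q (Z s q)) * u s q‖ ∂ν :=
                ENNReal.ofReal_toReal_le
            _ = ∫⁻ q, (‖G t s r q * (F s q (Y s q) - F s q (Z s q)) * u s q‖₊ : ℝ≥0∞) ∂ν :=
                lintegral_congr fun q => ofReal_norm _
      _ ≤ ∫⁻ s, ∫⁻ q, ENNReal.ofReal (K * S) * ((‖G t s r q‖₊ : ℝ≥0∞) * ‖u s q‖₊) ∂ν ∂μt := by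
          refine lintegral_mono_ae (ae_restrict_of_forall_mem measurableSet_Icc
            fun s hs => ?_)
          exact lintegral_mono_ae (ae_restrict_of_forall_mem hOmeas fun q hq =>
            hF_bd s hs q hq)
      _ = ENNReal.ofReal (K * S)
            * ∫⁻ s, ∫⁻ q, (‖G t s r q‖₊ : ℝ≥0∞) * ‖u s q‖₊ ∂ν ∂μt := by
          simp_rw [lintegral_const_mul' (ENNReal.ofReal (K * S)) _ ENNReal.ofReal_ne_top]
      _ = ENNReal.ofReal (K * S)
            * ∫⁻ z, (‖G t z.1 r z.2‖₊ : ℝ≥0∞) * (‖u z.1 z.2‖₊ : ℝ≥0∞) ∂(μt.prod ν) := by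
          congr 1
          exact (lintegral_prod _ (hGm.enorm.aemeasurable.mul hup.enorm)).symm
      _ ≤ ENNReal.ofReal (K * S)
            * ((ENNReal.ofReal (K ^ 2 * C)) ^ (1/2 : ℝ)
              * (ENNReal.ofReal M) ^ (1/2 : ℝ)) := by
          refine mul_le_mul_right (hCS.trans ?_) _
          exact mul_le_mul' (ENNReal.rpow_le_rpow hGsq (by norm_num))
            (ENNReal.rpow_le_rpow husq (by norm_num))
      _ = ENNReal.ofReal (K * S * (K * Real.sqrt C) * Real.sqrt M) := by
          rw [ENNReal.ofReal_rpow_of_nonneg (mul_nonneg (sq_nonneg K) hCnonneg) (by norm_num),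
            ENNReal.ofReal_rpow_of_nonneg hM (by norm_num),
            ← ENNReal.ofReal_mul (Real.rpow_nonneg (mul_nonneg (sq_nonneg K) hCnonneg) _),
            ← ENNReal.ofReal_mul (mul_nonneg hK.le hS)]
          congr 1
          rw [← Real.sqrt_eq_rpow, ← Real.sqrt_eq_rpow,
            Real.sqrt_mul (sq_nonneg K) C, Real.sqrt_sq hK.le]
          ring
  -- final real arithmetic
  have hsqC : Real.sqrt C ≤ Real.sqrt (γ / (γ - d)) * T ^ ((γ - (d:ℝ)) / (2 * γ)) := by
    have hq1 : p + 1 = (γ - d) / γ := by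
      rw [hpdef]
      field_simp
      ring
    have hC2 : C = t ^ (p + 1) * (γ / (γ - d)) := by
      rw [hCval, hq1, div_div_eq_mul_div, mul_div_assoc]
    have hhalf : (p + 1) * (1/2 : ℝ) = (γ - (d:ℝ)) / (2 * γ) := by
      rw [hq1, div_mul_div_comm, mul_one, mul_comm γ 2]
    calc Real.sqrt C = Real.sqrt (t ^ (p + 1)) * Real.sqrt (γ / (γ - d)) := by
          rw [hC2, Real.sqrt_mul (Real.rpow_nonneg ht0 _)]
      _ = t ^ ((γ - (d:ℝ)) / (2 * γ)) * Real.sqrt (γ / (γ - d)) := by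
          rw [Real.sqrt_eq_rpow, ← Real.rpow_mul ht0, hhalf]
      _ ≤ T ^ ((γ - (d:ℝ)) / (2 * γ)) * Real.sqrt (γ / (γ - d)) := by
          have he : (0:ℝ) ≤ (γ - (d:ℝ)) / (2 * γ) := by positivity
          exact mul_le_mul_of_nonneg_right (Real.rpow_le_rpow ht0 htT he)
            (Real.sqrt_nonneg _)
      _ = Real.sqrt (γ / (γ - d)) * T ^ ((γ - (d:ℝ)) / (2 * γ)) := by ring
  have hfinal : K * S * (K * Real.sqrt C) * Real.sqrt M
      ≤ K ^ 2 * Real.sqrt M * Real.sqrt (γ / (γ - d)) * T ^ ((γ - (d:ℝ)) / (2 * γ)) * S := by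
    calc K * S * (K * Real.sqrt C) * Real.sqrt M
        = K ^ 2 * Real.sqrt M * S * Real.sqrt C := by ring
      _ ≤ K ^ 2 * Real.sqrt M * S
            * (Real.sqrt (γ / (γ - d)) * T ^ ((γ - (d:ℝ)) / (2 * γ))) := by
          exact mul_le_mul_of_nonneg_left hsqC (by positivity)
      _ = K ^ 2 * Real.sqrt M * Real.sqrt (γ / (γ - d))
            * T ^ ((γ - (d:ℝ)) / (2 * γ)) * S := by ring
  calc |∫ s in Icc (0:ℝ) t, ∫ q in O,
          G t s r q * (F s q (Y s q) - F s q (Z s q)) * u s q|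
      = ‖∫ s in Icc (0:ℝ) t, ∫ q in O,
          G t s r q * (F s q (Y s q) - F s q (Z s q)) * u s q‖ := (Real.norm_eq_abs _).symm
    _ ≤ (∫⁻ s, ENNReal.ofReal
          ‖∫ q in O, G t s r q * (F s q (Y s q) - F s q (Z s q)) * u s q‖ ∂μt).toReal :=
        norm_integral_le_lintegral_norm _
    _ ≤ (ENNReal.ofReal (K * S * (K * Real.sqrt C) * Real.sqrt M)).toReal :=
        ENNReal.toReal_mono ENNReal.ofReal_ne_top key
    _ = K * S * (K * Real.sqrt C) * Real.sqrt M := ENNReal.toReal_ofReal (by positivity)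
    _ ≤ K ^ 2 * Real.sqrt M * Real.sqrt (γ / (γ - d))
          * T ^ ((γ - (d:ℝ)) / (2 * γ)) * S := hfinal


end
end

section
/- The set S_ac = { v ∈ C([0,T] : ℝ^∞) : there exists û ∈ L²([0,T] ; ℓ₂) such that v(t) = ∫₀^t û(s) ds for all t ∈ [0,T] } is a Borel-measurable subset of C([0,T] : ℝ^∞). -/
open MeasureTheory Filter Set Topology
open scoped ENNReal NNReal

noncomputable section Stmt18Aux

namespace Stmt18Aux

open MeasureTheory Set

abbrev E : Type := lp (fun _ : ℕ => ℝ) 2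

instance : Fact ((2:ℝ≥0∞) ≠ ∞) := ⟨by norm_num⟩

instance : TopologicalSpace.SeparableSpace E := by
  set s : Set E := Set.range (fun i : ℕ => lp.single 2 i (1:ℝ)) with hs
  have hdense : Dense ((Submodule.span ℝ s : Submodule ℝ E) : Set E) := by
    intro f
    have hsum := lp.hasSum_single (E := fun _ : ℕ => ℝ) (p := 2) (by norm_num) f
    refine mem_closure_of_tendsto hsum ?_
    filter_upwards with t
    refine Submodule.sum_mem _ fun i _ => ?_
    have h1 : lp.single (E := fun _ : ℕ => ℝ) 2 i (f i)
        = (f i : ℝ) • lp.single (E := fun _ : ℕ => ℝ) 2 i (1:ℝ) := by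
      apply lp.ext
      funext j
      by_cases hj : j = i
      · subst hj
        simp [lp.single_apply]
      · simp [lp.single_apply, hj]
    rw [h1]
    exact Submodule.smul_mem _ _ (Submodule.subset_span (Set.mem_range_self i))
  have huniv : TopologicalSpace.IsSeparable (Set.univ : Set E) := by
    rw [← hdense.closure_eq]
    exact (((Set.countable_range _).isSeparable).span).closure
  exact TopologicalSpace.isSeparable_univ_iff.mp huniv

/-- The reference measure: Lebesgue measure restricted to `[0, T]`. -/
abbrev μm (T : ℝ) : Measure ℝ := (volume : Measure ℝ).restrict (Icc (0:ℝ) T)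

instance (T : ℝ) : IsFiniteMeasure (μm T) :=
  ⟨by rw [Measure.restrict_apply_univ]; exact isCompact_Icc.measure_lt_top⟩

/-- The L² space of `ℓ₂`-valued functions on `[0, T]`. -/
abbrev H (T : ℝ) : Type := Lp E 2 (μm T)

lemma integrableOn_H (T : ℝ) (f : H T) : IntegrableOn (⇑f) (Icc (0:ℝ) T) volume := by
  have h1 : MemLp (⇑f) 1 (μm T) :=
    (Lp.memLp f).mono_exponent (by norm_num)
  exact memLp_one_iff_integrable.mp h1

lemma restrict_eq (T : ℝ) (t : Icc (0:ℝ) T) :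
    (μm T).restrict (Icc (0:ℝ) (t:ℝ)) = (volume : Measure ℝ).restrict (Icc (0:ℝ) (t:ℝ)) := by
  rw [Measure.restrict_restrict measurableSet_Icc,
    Set.inter_eq_left.mpr (Icc_subset_Icc le_rfl t.2.2)]

lemma ae_restrict_of_ae_mu {T : ℝ} {g1 g2 : ℝ → E} (h : g1 =ᵐ[μm T] g2) (t : Icc (0:ℝ) T) :
    g1 =ᵐ[(volume : Measure ℝ).restrict (Icc (0:ℝ) (t:ℝ))] g2 := by
  rw [← restrict_eq T t]
  exact h.filter_mono (ae_mono Measure.restrict_le_self)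

/-- The primitive of `f`, as a continuous map on `[0, T]` with values in `ℓ₂`. -/
def psi (T : ℝ) (f : H T) : C(Icc (0:ℝ) T, E) :=
  ⟨fun t => ∫ s in Icc (0:ℝ) (t:ℝ), f s, by
    exact (intervalIntegral.continuousOn_primitive_Icc (integrableOn_H T f)).restrict⟩

lemma psi_apply (T : ℝ) (f : H T) (t : Icc (0:ℝ) T) :
    psi T f t = ∫ s in Icc (0:ℝ) (t:ℝ), f s := rfl

lemma psi_add (T : ℝ) (f g : H T) : psi T (f + g) = psi T f + psi T g := by
  refine ContinuousMap.ext fun t => ?_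
  rw [ContinuousMap.add_apply]
  have hf : IntegrableOn (⇑f) (Icc (0:ℝ) (t:ℝ)) volume :=
    (integrableOn_H T f).mono_set (Icc_subset_Icc le_rfl t.2.2)
  have hg : IntegrableOn (⇑g) (Icc (0:ℝ) (t:ℝ)) volume :=
    (integrableOn_H T g).mono_set (Icc_subset_Icc le_rfl t.2.2)
  show (∫ s in Icc (0:ℝ) (t:ℝ), (f + g) s) = (∫ s in Icc (0:ℝ) (t:ℝ), f s)
      + ∫ s in Icc (0:ℝ) (t:ℝ), g s
  rw [integral_congr_ae (ae_restrict_of_ae_mu (Lp.coeFn_add f g) t)]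
  exact integral_add hf hg

lemma norm_setIntegral_le (T : ℝ) (f : H T) (t : Icc (0:ℝ) T) :
    ‖∫ s in Icc (0:ℝ) (t:ℝ), f s‖
      ≤ (((μm T) Set.univ) ^ ((2:ℝ)⁻¹)).toReal * ‖f‖ := by
  have h1 : ‖∫ s in Icc (0:ℝ) (t:ℝ), f s‖ ≤ ∫ s in Icc (0:ℝ) (t:ℝ), ‖f s‖ :=
    norm_integral_le_integral_norm _
  have h2 : (∫ s in Icc (0:ℝ) (t:ℝ), ‖f s‖) ≤ ∫ s in Icc (0:ℝ) T, ‖f s‖ := by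
    refine setIntegral_mono_set (integrableOn_H T f).norm ?_ ?_
    · exact Filter.Eventually.of_forall fun s => norm_nonneg _
    · exact HasSubset.Subset.eventuallyLE (Icc_subset_Icc le_rfl t.2.2)
  have h3 : (∫ s in Icc (0:ℝ) T, ‖f s‖) = (eLpNorm (⇑f) 1 (μm T)).toReal := by
    rw [integral_norm_eq_lintegral_enorm (Lp.aestronglyMeasurable f),
      eLpNorm_one_eq_lintegral_enorm]
  have h4 : eLpNorm (⇑f) 1 (μm T)
      ≤ eLpNorm (⇑f) 2 (μm T) * ((μm T) Set.univ) ^ ((2:ℝ)⁻¹) := by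
    have := eLpNorm_le_eLpNorm_mul_rpow_measure_univ (μ := μm T) (p := 1) (q := 2)
      (by norm_num) (Lp.aestronglyMeasurable f)
    convert this using 3
    norm_num
  have hfin : eLpNorm (⇑f) 2 (μm T) * ((μm T) Set.univ) ^ ((2:ℝ)⁻¹) ≠ ∞ := by
    refine ENNReal.mul_ne_top (Lp.eLpNorm_ne_top f) ?_
    exact (ENNReal.rpow_lt_top_of_nonneg (by norm_num) (measure_ne_top _ _)).ne
  have h5 : (eLpNorm (⇑f) 1 (μm T)).toReal
      ≤ (((μm T) Set.univ) ^ ((2:ℝ)⁻¹)).toReal * ‖f‖ := by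
    have := ENNReal.toReal_mono hfin h4
    rwa [ENNReal.toReal_mul, mul_comm, ← Lp.norm_def] at this
  linarith
lemma continuous_psi (T : ℝ) : Continuous (psi T) := by
  have hb : ∀ f : H T, ‖psi T f‖ ≤ (((μm T) Set.univ) ^ ((2:ℝ)⁻¹)).toReal * ‖f‖ := by
    intro f
    refine (ContinuousMap.norm_le _ (by positivity)).mpr fun t => ?_
    exact norm_setIntegral_le T f t
  exact AddMonoidHomClass.continuous_of_bound
    (AddMonoidHom.mk' (psi T) (psi_add T)) _ hb

/-- The inclusion `ℓ₂ → ℝ^∞` as a continuous map. -/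
def coePi : C(E, ℕ → ℝ) :=
  ⟨fun x i => x i, by
    refine continuous_pi fun i => ?_
    have : LipschitzWith 1 (fun x : E => x i) := by
      refine LipschitzWith.of_dist_le_mul fun x y => ?_
      simp only [NNReal.coe_one, one_mul, dist_eq_norm]
      calc ‖x i - y i‖ = ‖(x - y) i‖ := by rw [lp.coeFn_sub]; rfl
        _ ≤ ‖x - y‖ := lp.norm_apply_le_norm (by norm_num) _ _
    exact this.continuous⟩

/-- The map sending an `L²` density to its path, as an element of `C([0,T], ℝ^∞)`. -/
def phi (T : ℝ) (f : H T) : C(Icc (0:ℝ) T, ℕ → ℝ) := coePi.comp (psi T f)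

lemma continuous_phi (T : ℝ) : Continuous (phi T) :=
  (ContinuousMap.continuous_postcomp _).comp (continuous_psi T)

lemma eq_zero_of_integrals (T : ℝ) (h : H T)
    (h0 : ∀ t : Icc (0:ℝ) T, (∫ s in Icc (0:ℝ) (t:ℝ), h s) = 0) : h = 0 := by
  set Hi : ℝ → E := Set.indicator (Icc (0:ℝ) T) (⇑h) with hHi
  have hint : Integrable Hi volume :=
    (integrableOn_H T h).integrable_indicator measurableSet_Icc
  have hloc : LocallyIntegrable Hi volume := hint.locallyIntegrable
  -- all sub-interval integrals vanish
  have hz : ∀ x y : ℝ, 0 ≤ x → x ≤ y → y ≤ T → (∫ s in Icc x y, Hi s) = 0 := by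
    intro x y hx hxy hyT
    have hsub : Icc x y ⊆ Icc (0:ℝ) T := Icc_subset_Icc hx hyT
    have e1 : (∫ s in Icc x y, Hi s) = ∫ s in Icc x y, h s := by
      refine setIntegral_congr_fun measurableSet_Icc fun s hs => ?_
      exact Set.indicator_of_mem (hsub hs) _
    have hdisj : Disjoint (Icc (0:ℝ) x) (Ioc x y) := by
      refine Set.disjoint_left.mpr fun a ha1 ha2 => ?_
      exact absurd ha1.2 (not_le.mpr ha2.1)
    have hIf : IntegrableOn (⇑h) (Icc (0:ℝ) x) volume :=
      (integrableOn_H T h).mono_set (Icc_subset_Icc le_rfl (hxy.trans hyT))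
    have hIg : IntegrableOn (⇑h) (Ioc x y) volume :=
      (integrableOn_H T h).mono_set ((Ioc_subset_Icc_self).trans hsub)
    have e2 : (∫ s in Icc (0:ℝ) y, h s)
        = (∫ s in Icc (0:ℝ) x, h s) + ∫ s in Ioc x y, h s := by
      rw [← setIntegral_union hdisj measurableSet_Ioc hIf hIg,
        Icc_union_Ioc_eq_Icc hx hxy]
    have e3 : (∫ s in Ioc x y, h s) = 0 := by
      have hx' := h0 ⟨x, hx, hxy.trans hyT⟩
      have hy' := h0 ⟨y, hx.trans hxy, hyT⟩
      simp only at hx' hy'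
      rw [hy', hx', zero_add] at e2
      exact e2.symm
    rw [e1, integral_Icc_eq_integral_Ioc, e3]
  -- Lebesgue differentiation
  set v := IsUnifLocDoublingMeasure.vitaliFamily (volume : Measure ℝ) 1 with hv
  have hae := v.ae_tendsto_average hloc
  have hae2 : ∀ᵐ x ∂(volume : Measure ℝ), x ∈ Ico (0:ℝ) T → Hi x = 0 := by
    filter_upwards [hae] with x hx hxI
    have htt : Tendsto (fun y => ⨍ s in Icc x y, Hi s) (𝓝[>] x) (𝓝 (Hi x)) :=
      hx.comp (Real.tendsto_Icc_vitaliFamily_right x)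
    have hev : ∀ᶠ y in 𝓝[>] x, (fun y => ⨍ s in Icc x y, Hi s) y = 0 := by
      filter_upwards [Ioc_mem_nhdsGT_of_mem (⟨le_rfl, hxI.2⟩ : x ∈ Ico x T)] with y hy
      rw [setAverage_eq, hz x y hxI.1 hy.1.le hy.2, smul_zero]
    have : Tendsto (fun y => ⨍ s in Icc x y, Hi s) (𝓝[>] x) (𝓝 0) := by
      refine Tendsto.congr' ?_ tendsto_const_nhds
      filter_upwards [hev] with y hy using hy.symm
    exact tendsto_nhds_unique htt this
  -- conclude h = 0 in Lp
  have hres : (μm T) = (volume : Measure ℝ).restrict (Ico (0:ℝ) T) :=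
    (Measure.restrict_congr_set Ico_ae_eq_Icc).symm
  have hmem : ∀ᵐ x ∂(μm T), x ∈ Ico (0:ℝ) T := by
    rw [hres]; exact ae_restrict_mem measurableSet_Ico
  have hae3 : ∀ᵐ x ∂(μm T), x ∈ Ico (0:ℝ) T → Hi x = 0 :=
    ae_restrict_of_ae hae2
  have : (⇑h) =ᵐ[μm T] 0 := by
    filter_upwards [hmem, hae3] with x h1 h2
    have := h2 h1
    rwa [hHi, Set.indicator_of_mem (Ico_subset_Icc_self h1)] at this
  exact Lp.ext (this.trans (Lp.coeFn_zero E 2 (μm T)).symm)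

lemma injective_phi (T : ℝ) : Function.Injective (phi T) := by
  intro f g hfg
  have hco : ∀ t : Icc (0:ℝ) T,
      (∫ s in Icc (0:ℝ) (t:ℝ), f s) = ∫ s in Icc (0:ℝ) (t:ℝ), g s := by
    intro t
    have := DFunLike.congr_fun hfg t
    exact lp.ext this
  have hI : ∀ t : Icc (0:ℝ) T, (∫ s in Icc (0:ℝ) (t:ℝ), (f - g) s) = 0 := by
    intro t
    have hf : IntegrableOn (⇑f) (Icc (0:ℝ) (t:ℝ)) volume :=
      (integrableOn_H T f).mono_set (Icc_subset_Icc le_rfl t.2.2)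
    have hg : IntegrableOn (⇑g) (Icc (0:ℝ) (t:ℝ)) volume :=
      (integrableOn_H T g).mono_set (Icc_subset_Icc le_rfl t.2.2)
    rw [integral_congr_ae (ae_restrict_of_ae_mu (Lp.coeFn_sub f g) t)]
    simp only [Pi.sub_apply]
    rw [integral_sub hf hg, hco t, sub_self]
  have := eq_zero_of_integrals T (f - g) hI
  exact sub_eq_zero.mp this

lemma range_phi (T : ℝ) :
    {v : C(Icc (0:ℝ) T, ℕ → ℝ) |
        ∃ u : ℝ → lp (fun _ : ℕ => ℝ) 2,
          MemLp u 2 ((volume : Measure ℝ).restrict (Icc (0:ℝ) T)) ∧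
          ∀ t : Icc (0:ℝ) T, ∀ i : ℕ,
            v t i = (↑(∫ s in Icc (0:ℝ) (t:ℝ), u s) : ℕ → ℝ) i} = Set.range (phi T) := by
  ext v
  constructor
  · rintro ⟨u, hu, hvu⟩
    refine ⟨hu.toLp u, ?_⟩
    ext t i
    have he : (∫ s in Icc (0:ℝ) (t:ℝ), (hu.toLp u) s) = ∫ s in Icc (0:ℝ) (t:ℝ), u s :=
      integral_congr_ae (ae_restrict_of_ae_mu (hu.coeFn_toLp) t)
    show ((∫ s in Icc (0:ℝ) (t:ℝ), (hu.toLp u) s : E) : ℕ → ℝ) i = v t i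
    rw [he, hvu t i]
  · rintro ⟨f, rfl⟩
    exact ⟨⇑f, Lp.memLp f, fun t i => rfl⟩

end Stmt18Aux

end Stmt18Aux

/-- **Measurability of the set of absolutely continuous paths with `ℓ₂` densities.**
`S_ac = {v ∈ C([0,T] : ℝ^∞) : v(t) = ∫₀^t û(s) ds for some û ∈ L²([0,T]; ℓ₂)}`
is a Borel subset of `C([0,T] : ℝ^∞)`, where `ℝ^∞ = ℕ → ℝ` carries the product
topology, `ℓ₂ ⊆ ℝ^∞` is the Hilbert space of square-summable sequences, and the
integral is the Bochner integral in `ℓ₂`, read coordinatewise in `ℝ^∞`. -/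
theorem stmt_18 (T : ℝ) (hT : 0 < T) :
    MeasurableSet[borel C(Icc (0:ℝ) T, ℕ → ℝ)]
      {v : C(Icc (0:ℝ) T, ℕ → ℝ) |
        ∃ u : ℝ → lp (fun _ : ℕ => ℝ) 2,
          MemLp u 2 ((volume : Measure ℝ).restrict (Icc (0:ℝ) T)) ∧
          ∀ t : Icc (0:ℝ) T, ∀ i : ℕ,
            v t i = (↑(∫ s in Icc (0:ℝ) (t:ℝ), u s) : ℕ → ℝ) i} := by
  letI : MeasurableSpace C(Icc (0:ℝ) T, ℕ → ℝ) := borel _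
  haveI : BorelSpace C(Icc (0:ℝ) T, ℕ → ℝ) := ⟨rfl⟩
  rw [Stmt18Aux.range_phi T]
  exact measurableSet_range_of_continuous_injective
    (Stmt18Aux.continuous_phi T) (Stmt18Aux.injective_phi T)
end
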